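/- arXiv:2009.03483 — 4 statements merged into one kernel-verified Lean document; each statement's English description precedes it below -/
import Mathlib

section
/- For every positive integer j, the infinite product over all positive integers k ≠ j of (1 - j²/k²) equals (-1)^{j+1}/2. -/
open Filter Finset Real Topology

namespace Stmt1Aux

/-- `∏_{i<m} (i + a + 1) = (a+m)!/a!` in ℝ. -/
lemma prod_cast_add (a m : ℕ) :
    ∏ i ∈ range m, ((i : ℝ) + a + 1) = (Nat.factorial (a + m) : ℝ) / (Nat.factorial a : ℝ) := by
  induction m with
  | zero =>
    simp [div_self (Nat.cast_ne_zero.mpr (Nat.factorial_ne_zero a) : ((Nat.factorial a : ℝ)) ≠ 0)]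
  | succ m ih =>
    rw [prod_range_succ, ih]
    have h1 : ((Nat.factorial a : ℝ)) ≠ 0 := Nat.cast_ne_zero.mpr (Nat.factorial_ne_zero a)
    rw [show a + (m + 1) = (a + m) + 1 from rfl, Nat.factorial_succ]
    push_cast
    field_simp
    ring

/-- `∏_{i<m} (m - i) = m!` in ℝ. -/
lemma prod_sub (m : ℕ) : ∏ i ∈ range m, ((m : ℝ) - i) = (Nat.factorial m : ℝ) := by
  induction m with
  | zero => simp
  | succ m ih =>
    rw [prod_range_succ']
    have h : (fun i : ℕ => (((m+1 : ℕ) : ℝ) - (i+1 : ℕ))) = (fun i : ℕ => ((m : ℝ) - i)) := by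
      funext i; push_cast; ring
    push_cast
    rw [show (∏ k ∈ range m, ((m:ℝ) + 1 - (↑k + 1))) = ∏ k ∈ range m, ((m:ℝ) - k) from
      Finset.prod_congr rfl (fun i _ => by ring), ih, Nat.factorial_succ]
    push_cast
    ring

end Stmt1Aux

namespace Stmt1Aux

/-- Multiplying a `HasProd` by a sign function that is 1 off a finite set. -/
lemma hasProd_mul_of_eq_one_off {u h : ℕ → ℝ} {L : ℝ} (S : Finset ℕ)
    (hu : ∀ i ∉ S, u i = 1) (hh : HasProd h L) :
    HasProd (fun i => u i * h i) ((∏ i ∈ S, u i) * L) := by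
  have hev : ∀ᶠ (A : Finset ℕ) in atTop,
      (∏ i ∈ S, u i) * ∏ i ∈ A, h i = ∏ i ∈ A, (u i * h i) := by
    filter_upwards [Filter.eventually_ge_atTop S] with A hA
    rw [Finset.prod_mul_distrib]
    congr 1
    exact Finset.prod_subset hA fun i _ hi => hu i hi
  exact (tendsto_const_nhds.mul hh).congr' hev

variable (j : ℕ)

/-- Extended function over ℕ. -/
noncomputable def g (k : ℕ) : ℝ := if k = j then 1 else 1 - (j : ℝ) ^ 2 / (k : ℝ) ^ 2

lemma g_zero (hj : 1 ≤ j) : g j 0 = 1 := by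
  rw [g, if_neg (by omega)]
  norm_num

lemma g_self : g j j = 1 := by rw [g, if_pos rfl]

lemma g_of_ne {k : ℕ} (hk : k ≠ j) : g j k = 1 - (j : ℝ) ^ 2 / (k : ℝ) ^ 2 := by
  rw [g, if_neg hk]

lemma g_ne_zero (hj : 1 ≤ j) (k : ℕ) : g j k ≠ 0 := by
  rcases eq_or_ne k j with rfl | hk
  · rw [g_self]; norm_num
  rw [g_of_ne j hk]
  rcases Nat.eq_zero_or_pos k with rfl | hk1
  · norm_num
  have hk0 : ((k : ℝ)) ^ 2 ≠ 0 := by positivity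
  have hjk : (j : ℝ) ≠ (k : ℝ) := by exact_mod_cast Ne.symm hk
  rw [sub_ne_zero]
  intro hcon
  have hkk : (0:ℝ) < (k:ℝ)^2 := by positivity
  have h2 : (j:ℝ)^2 = (k:ℝ)^2 := by
    field_simp at hcon
    exact_mod_cast hcon.symm
  have hj0 : (0:ℝ) ≤ (j:ℝ) := by positivity
  have hk0' : (0:ℝ) ≤ (k:ℝ) := by positivity
  exact hjk (by nlinarith)

lemma g_nonneg_of_ge (hj : 1 ≤ j) {k : ℕ} (hk : j ≤ k) : 0 ≤ g j k := by
  rcases eq_or_ne k j with rfl | hne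
  · rw [g_self]; norm_num
  rw [g_of_ne j hne]
  have hk1 : (1:ℝ) ≤ (k:ℝ) := by exact_mod_cast Nat.one_le_iff_ne_zero.mpr (by omega)
  have hjk : (j : ℝ) ≤ (k : ℝ) := by exact_mod_cast hk
  have : (j:ℝ)^2 / (k:ℝ)^2 ≤ 1 := by
    rw [div_le_one (by positivity)]
    nlinarith
  linarith

/-- Bound on `log (1 - x)` for small positive `x`. -/
lemma log_one_sub_bound {x : ℝ} (hx_pos : 0 < x) (hx_le : x ≤ 1/4) :
    ‖Real.log |1 - x|‖ ≤ 2 * x := by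
  have h1x : (0:ℝ) < 1 - x := by linarith
  rw [abs_of_pos h1x]
  have hlog_le : Real.log (1-x) ≤ 0 := Real.log_nonpos (by linarith) (by linarith)
  rw [Real.norm_eq_abs, abs_of_nonpos hlog_le]
  have hbound : -Real.log (1-x) ≤ x / (1-x) := by
    rw [← Real.log_inv]
    have := Real.log_le_sub_one_of_pos (x := (1-x)⁻¹) (by positivity)
    have heq : (1-x)⁻¹ - 1 = x / (1-x) := by field_simp; ring
    linarith [this, heq]
  have hb2 : x / (1-x) ≤ 2 * x := by
    have h12 : (1:ℝ)/2 ≤ 1 - x := by linarith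
    have h3 : x / (1-x) ≤ x / (1/2) :=
      div_le_div_of_nonneg_left (le_of_lt hx_pos) (by norm_num) h12
    have h4 : x / (1/2 : ℝ) = 2 * x := by ring
    linarith
  linarith

set_option maxHeartbeats 1000000 in
lemma summable_log (hj : 1 ≤ j) : Summable fun k => Real.log |g j k| := by
  rw [← summable_nat_add_iff (2 * j + 1)]
  apply Summable.of_norm_bounded (g := fun n : ℕ => 2 * (j:ℝ)^2 / ((n:ℝ)+1)^2)
  · have h1 : Summable fun n : ℕ => 2 * (j:ℝ)^2 * (1 / ((n:ℝ))^2) :=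
      (summable_one_div_nat_pow.mpr one_lt_two).mul_left _
    have h2 : Summable fun n : ℕ => 2 * (j:ℝ)^2 * (1 / ((n+1:ℕ):ℝ)^2) :=
      ((summable_nat_add_iff 1).mpr h1)
    apply h2.congr
    intro n
    push_cast
    ring
  · intro n
    have hkj : n + (2 * j + 1) ≠ j := by omega
    have hjpos : (1:ℝ) ≤ (j:ℝ) := by exact_mod_cast hj
    have hkR : ((n:ℝ) + (2 * (j:ℝ) + 1)) = (((n + (2*j+1) : ℕ)):ℝ) := by push_cast; ring
    have hx_pos : 0 < (j:ℝ)^2 / (((n + (2*j+1) : ℕ)):ℝ)^2 := by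
      have : (0:ℝ) < (((n + (2*j+1) : ℕ)):ℝ) := by positivity
      positivity
    have hx_le : (j:ℝ)^2 / (((n + (2*j+1) : ℕ)):ℝ)^2 ≤ 1/4 := by
      have h1 : (j:ℝ)^2 / (((n + (2*j+1) : ℕ)):ℝ)^2 ≤ (j:ℝ)^2 / (2*(j:ℝ))^2 := by
        apply div_le_div_of_nonneg_left (by positivity) (by positivity)
        have : (2*(j:ℝ)) ≤ (((n + (2*j+1) : ℕ)):ℝ) := by
          rw [← hkR]; linarith
        nlinarith
      have h2 : (j:ℝ)^2 / (2*(j:ℝ))^2 = 1/4 := by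
        have hj0 : (j:ℝ) ≠ 0 := by linarith
        field_simp
        ring
      linarith
    have hgk : g j (n + (2*j+1)) = 1 - (j:ℝ)^2 / (((n + (2*j+1) : ℕ)):ℝ)^2 := g_of_ne j hkj
    rw [hgk]
    have hmain := log_one_sub_bound hx_pos hx_le
    have hfin : (j:ℝ)^2 / (((n + (2*j+1) : ℕ)):ℝ)^2 ≤ (j:ℝ)^2 / ((n:ℝ)+1)^2 := by
      apply div_le_div_of_nonneg_left (by positivity) (by positivity)
      have : ((n:ℝ)+1) ≤ (((n + (2*j+1) : ℕ)):ℝ) := by rw [← hkR]; linarith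
      nlinarith [this]
    calc ‖Real.log |1 - (j:ℝ)^2 / (((n + (2*j+1) : ℕ)):ℝ)^2|‖
        ≤ 2 * ((j:ℝ)^2 / (((n + (2*j+1) : ℕ)):ℝ)^2) := hmain
      _ ≤ 2 * ((j:ℝ)^2 / ((n:ℝ)+1)^2) := by linarith
      _ = 2 * (j:ℝ)^2 / ((n:ℝ)+1)^2 := by rw [mul_div_assoc]

lemma multipliable_g (hj : 1 ≤ j) : Multipliable (g j) := by
  -- positive part
  have habs : HasProd (fun k => |g j k|) (rexp (∑' k, Real.log |g j k|)) := by
    have h0 := (summable_log j hj).hasSum.rexp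
    have hfun : (rexp ∘ fun k => Real.log |g j k|) = fun k => |g j k| :=
      funext fun k => Real.exp_log (abs_pos.mpr (g_ne_zero j hj k))
    rwa [hfun] at h0
  -- sign part
  set u : ℕ → ℝ := fun k => if g j k < 0 then -1 else 1 with hu
  have hu1 : ∀ i ∉ Finset.range j, u i = 1 := by
    intro i hi
    rw [Finset.mem_range, not_lt] at hi
    rw [hu]
    simp only [if_neg (not_lt.mpr (g_nonneg_of_ge j hj hi))]
  have hgu : g j = fun k => u k * |g j k| := by
    funext k
    rcases lt_or_ge (g j k) 0 with h | h
    · rw [hu]; simp only [if_pos h, abs_of_neg h]; ring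
    · rw [hu]; simp only [if_neg (not_lt.mpr h), abs_of_nonneg h, one_mul]
  rw [hgu]
  exact (hasProd_mul_of_eq_one_off (Finset.range j) hu1 habs).multipliable

end Stmt1Aux

namespace Stmt1Aux

lemma prod_formula (j : ℕ) (hj : 1 ≤ j) (m : ℕ) :
    ∏ k ∈ range (j + 1 + m), g j k =
      (-1:ℝ)^(j+1)/2 * ((Nat.factorial (2*j+m) : ℝ) * (Nat.factorial m : ℝ)
        / ((Nat.factorial (j+m) : ℝ))^2) := by
  induction m with
  | zero =>
    obtain ⟨p, rfl⟩ : ∃ p, j = p + 1 := ⟨j - 1, by omega⟩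
    rw [show p + 1 + 1 + 0 = (p+1) + 1 from rfl, prod_range_succ, g_self, mul_one,
      prod_range_succ', g_zero _ (by omega), mul_one]
    have hterm : ∀ i ∈ range p, g (p+1) (i+1) =
        (-((p:ℝ) - i)) * ((i:ℝ) + ((p+1:ℕ):ℝ) + 1) / ((i:ℝ) + ((0:ℕ):ℝ) + 1)^2 := by
      intro i hi
      rw [g_of_ne _ (by rw [mem_range] at hi; omega)]
      have h0 : ((i:ℝ) + 1) ≠ 0 := by positivity
      push_cast
      field_simp
      ring
    rw [Finset.prod_congr rfl hterm, prod_div_distrib, prod_mul_distrib, prod_pow,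
      prod_cast_add, prod_cast_add]
    have hneg : ∏ i ∈ range p, (-((p:ℝ) - i)) = (-1:ℝ)^p * (Nat.factorial p : ℝ) := by
      rw [show (fun i : ℕ => -((p:ℝ) - i)) = fun i : ℕ => (-1) * ((p:ℝ) - i) from
        funext fun i => by ring]
      rw [Finset.prod_mul_distrib, Finset.prod_const, prod_sub, card_range]
    rw [hneg]
    have hf1 : (Nat.factorial (2*(p+1)+0) : ℝ) =
        (2*(p:ℝ)+2) * (Nat.factorial ((p+1)+p) : ℝ) := by
      rw [show 2*(p+1)+0 = ((p+1)+p)+1 by ring, Nat.factorial_succ]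
      push_cast; ring
    have hf2 : (Nat.factorial (p+1) : ℝ) = ((p:ℝ)+1) * (Nat.factorial p : ℝ) := by
      rw [Nat.factorial_succ]; push_cast; ring
    have hf3 : (Nat.factorial ((p+1)+0) : ℝ) = ((p:ℝ)+1) * (Nat.factorial p : ℝ) := hf2
    rw [hf1, hf3, show (0:ℕ)+p = p from Nat.zero_add p, Nat.factorial_zero]
    have hp0 : (Nat.factorial p : ℝ) ≠ 0 := Nat.cast_ne_zero.mpr (Nat.factorial_ne_zero p)
    have hp1 : ((p:ℝ)+1) ≠ 0 := by positivity
    have hpow : (-1:ℝ)^(p+1+1) = (-1:ℝ)^p := by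
      rw [pow_succ, pow_succ]; ring
    rw [hpow]
    field_simp
    ring
  | succ m ih =>
    rw [show j + 1 + (m+1) = (j+1+m) + 1 from rfl, prod_range_succ, ih,
      g_of_ne j (show j + 1 + m ≠ j by omega)]
    have hfac1 : (Nat.factorial (2*j+(m+1)) : ℝ) =
        (2*(j:ℝ)+(m:ℝ)+1) * (Nat.factorial (2*j+m) : ℝ) := by
      rw [show 2*j+(m+1) = (2*j+m)+1 from rfl, Nat.factorial_succ]; push_cast; ring
    have hfac2 : (Nat.factorial (m+1) : ℝ) = ((m:ℝ)+1) * (Nat.factorial m : ℝ) := by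
      rw [Nat.factorial_succ]; push_cast; ring
    have hfac3 : (Nat.factorial (j+(m+1)) : ℝ) =
        ((j:ℝ)+(m:ℝ)+1) * (Nat.factorial (j+m) : ℝ) := by
      rw [show j+(m+1) = (j+m)+1 from rfl, Nat.factorial_succ]; push_cast; ring
    have h2 : ((j:ℝ)+(m:ℝ)+1) ≠ 0 := by positivity
    have hval : (1 : ℝ) - (j:ℝ)^2/(((j+1+m:ℕ)):ℝ)^2 =
        ((m:ℝ)+1)*(2*(j:ℝ)+(m:ℝ)+1)/((j:ℝ)+(m:ℝ)+1)^2 := by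
      have hc : ((j+1+m:ℕ):ℝ) = (j:ℝ)+(m:ℝ)+1 := by push_cast; ring
      rw [hc]
      field_simp
      ring
    rw [hfac1, hfac2, hfac3, hval]
    have h1 : ((Nat.factorial (j+m)):ℝ) ≠ 0 := Nat.cast_ne_zero.mpr (Nat.factorial_ne_zero _)
    field_simp

lemma ratio_repr (j m : ℕ) :
    (Nat.factorial (2*j+m) : ℝ) * (Nat.factorial m : ℝ) / ((Nat.factorial (j+m) : ℝ))^2 =
      ∏ i ∈ range j, (((i:ℝ) + ((j+m:ℕ):ℝ) + 1) / ((i:ℝ) + ((m:ℕ):ℝ) + 1)) := by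
  rw [prod_div_distrib, prod_cast_add (j+m) j, prod_cast_add m j]
  have e1 : (j+m)+j = 2*j+m := by ring
  have e2 : m + j = j + m := by ring
  rw [e1, e2]
  have h1 : ((Nat.factorial (j+m)):ℝ) ≠ 0 := Nat.cast_ne_zero.mpr (Nat.factorial_ne_zero _)
  have h2 : ((Nat.factorial m):ℝ) ≠ 0 := Nat.cast_ne_zero.mpr (Nat.factorial_ne_zero _)
  have h3 : ((Nat.factorial (2*j+m)):ℝ) ≠ 0 := Nat.cast_ne_zero.mpr (Nat.factorial_ne_zero _)
  field_simp

lemma ratio_tendsto (j : ℕ) :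
    Tendsto (fun m : ℕ => (Nat.factorial (2*j+m) : ℝ) * (Nat.factorial m : ℝ)
      / ((Nat.factorial (j+m) : ℝ))^2) atTop (𝓝 1) := by
  have h1 : (1:ℝ) = ∏ _i ∈ range j, (1:ℝ) := by simp
  rw [h1]
  refine Tendsto.congr (fun m => (ratio_repr j m).symm) (tendsto_finset_prod _ fun i _ => ?_)
  have heq : ∀ m : ℕ, (1:ℝ) + (j:ℝ)/((m:ℝ) + (i:ℝ) + 1) =
      ((i:ℝ) + ((j+m:ℕ):ℝ) + 1) / ((i:ℝ) + ((m:ℕ):ℝ) + 1) := by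
    intro m
    have h0 : (m:ℝ) + (i:ℝ) + 1 ≠ 0 := by positivity
    have h0' : (i:ℝ) + (m:ℝ) + 1 ≠ 0 := by positivity
    push_cast
    field_simp
    ring
  have hz : Tendsto (fun m : ℕ => (j:ℝ)/((m:ℝ) + (i:ℝ) + 1)) atTop (𝓝 0) := by
    apply Tendsto.div_atTop tendsto_const_nhds
    apply tendsto_atTop_add_const_right
    apply tendsto_atTop_add_const_right
    exact tendsto_natCast_atTop_atTop
  have hmain := (tendsto_const_nhds (x := (1:ℝ)) (f := atTop)).add hz
  rw [add_zero] at hmain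
  exact Tendsto.congr heq hmain

end Stmt1Aux

open Stmt1Aux in
/-- For every positive integer `j`,
`∏_{k ≥ 1, k ≠ j} (1 - j²/k²) = (-1)^(j+1)/2`. -/
theorem stmt1 (j : ℕ) (hj : 1 ≤ j) :
    (∏' k : {k : ℕ // 1 ≤ k ∧ k ≠ j}, (1 - (j : ℝ) ^ 2 / ((k : ℕ) : ℝ) ^ 2)) =
      (-1 : ℝ) ^ (j + 1) / 2 := by
  have h1 : (∏' k : {k : ℕ // 1 ≤ k ∧ k ≠ j}, (1 - (j : ℝ) ^ 2 / ((k : ℕ) : ℝ) ^ 2)) =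
      ∏' k : ℕ, Set.mulIndicator {k : ℕ | 1 ≤ k ∧ k ≠ j}
        (fun k : ℕ => 1 - (j : ℝ) ^ 2 / (k : ℝ) ^ 2) k :=
    _root_.tprod_subtype {k : ℕ | 1 ≤ k ∧ k ≠ j} (fun k : ℕ => 1 - (j : ℝ) ^ 2 / (k : ℝ) ^ 2)
  have h2 : Set.mulIndicator {k : ℕ | 1 ≤ k ∧ k ≠ j}
      (fun k : ℕ => 1 - (j : ℝ) ^ 2 / (k : ℝ) ^ 2) = g j := by
    funext k
    rw [Set.mulIndicator_apply]
    by_cases hkj : k = j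
    · subst hkj
      rw [if_neg (by simp), g_self]
    · rcases Nat.eq_zero_or_pos k with rfl | hk1
      · rw [if_neg (by simp), g_of_ne j hkj]
        norm_num
      · rw [if_pos ⟨hk1, hkj⟩, g_of_ne j hkj]
  rw [h1, h2]
  have hm := multipliable_g j hj
  have hT := hm.hasProd.tendsto_prod_nat
  have hT2 : Tendsto (fun n => ∏ k ∈ range n, g j k) atTop (𝓝 ((-1:ℝ)^(j+1)/2)) := by
    rw [← tendsto_add_atTop_iff_nat (j+1)]
    have hcong : ∀ m : ℕ, (-1:ℝ)^(j+1)/2 * ((Nat.factorial (2*j+m) : ℝ) *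
        (Nat.factorial m : ℝ) / ((Nat.factorial (j+m) : ℝ))^2) =
        ∏ k ∈ range (m + (j+1)), g j k := by
      intro m
      rw [show m + (j+1) = j+1+m by ring]
      exact (prod_formula j hj m).symm
    have hmul := (tendsto_const_nhds (x := (-1:ℝ)^(j+1)/2) (f := atTop)).mul (ratio_tendsto j)
    rw [mul_one] at hmul
    exact Tendsto.congr hcong hmul
  exact tendsto_nhds_unique hT hT2
end

section
/- Consequently, for every positive integer j, the infinite product over all positive integers k ≠ j of (1 - j²/k²)^{-1} equals 2·(-1)^{j+1}. -/
open Finset Filter Real Topology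

-- m ! * ∏_{i<k} (m+1+i) = (m+k)!
lemma fact_mul_prod (m : ℕ) : ∀ k : ℕ, m.factorial * ∏ i ∈ range k, (m + 1 + i) = (m + k).factorial := by
  intro k
  induction k with
  | zero => simp
  | succ k ih =>
      rw [Finset.prod_range_succ, ← mul_assoc, ih]
      rw [show m + (k+1) = (m + k) + 1 from rfl, Nat.factorial_succ]
      ring

-- ∏_{i < m} (m - i) = m !  (descending product)
lemma prod_desc (m : ℕ) : ∏ i ∈ range m, (m - i) = m.factorial := by
  rw [← Finset.prod_range_add_one_eq_factorial m, ← Finset.prod_range_reflect (fun i => i + 1) m]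
  apply Finset.prod_congr rfl
  intro i hi
  rw [Finset.mem_range] at hi
  omega

noncomputable def gfun (j : ℕ) : ℕ → ℝ :=
  fun k => if k = j then 1 else (1 - (j:ℝ)^2/(k:ℝ)^2)⁻¹

lemma closed_form (j : ℕ) (hj : 1 ≤ j) : ∀ n, j ≤ n →
    ∏ k ∈ range (n+1), gfun j k =
      2 * (-1:ℝ)^(j+1) *
        ((n.factorial:ℝ)^2 / (((n-j).factorial : ℝ) * ((n+j).factorial : ℝ))) := by
  refine Nat.le_induction ?_ ?_
  · -- base case n = j
    obtain ⟨m, rfl⟩ : ∃ m, j = m + 1 := ⟨j - 1, by omega⟩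
    rw [Finset.prod_range_succ]
    have hgj : gfun (m+1) (m+1) = 1 := by simp [gfun]
    have hg0 : gfun (m+1) 0 = 1 := by
      simp [gfun]
    rw [hgj, mul_one, Finset.prod_range_succ', hg0, mul_one]
    have hfac : ∀ i ∈ range m, gfun (m+1) (i+1)
        = ((i:ℝ)+1)^2 / (((i:ℝ)+1)^2 - ((m:ℝ)+1)^2) := by
      intro i hi
      rw [Finset.mem_range] at hi
      have h1 : ((i:ℝ)+1) ≠ 0 := by positivity
      have h2 : (i : ℕ) + 1 ≠ m + 1 := by omega
      simp only [gfun, if_neg h2]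
      rw [one_sub_div (by positivity), inv_div]
      push_cast
      ring_nf
    rw [Finset.prod_congr rfl hfac, Finset.prod_div_distrib]
    have hnum : ∏ i ∈ range m, ((i:ℝ)+1)^2 = (m.factorial:ℝ)^2 := by
      rw [Finset.prod_pow]
      congr 1
      exact_mod_cast Finset.prod_range_add_one_eq_factorial m
    have hden : ∏ i ∈ range m, (((i:ℝ)+1)^2 - ((m:ℝ)+1)^2)
        = (-1:ℝ)^m * (m.factorial:ℝ) * ((∏ i ∈ range m, (m+2+i) : ℕ) : ℝ) := by
      have : ∀ i ∈ range m, (((i:ℝ)+1)^2 - ((m:ℝ)+1)^2)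
          = (-1) * (((m - i : ℕ) : ℝ) * ((m+2+i : ℕ) : ℝ)) := by
        intro i hi
        rw [Finset.mem_range] at hi
        have : ((m - i : ℕ) : ℝ) = (m : ℝ) - i := by
          have := Nat.cast_sub (le_of_lt hi) (R := ℝ)
          exact this
        rw [this]
        push_cast
        ring
      rw [Finset.prod_congr rfl this, Finset.prod_mul_distrib, Finset.prod_mul_distrib]
      rw [Finset.prod_const, ← Nat.cast_prod, ← Nat.cast_prod, prod_desc, Finset.card_range]
      push_cast
      ring
    rw [hnum, hden]
    -- key factorial relation
    have hkey : ((m+1).factorial : ℝ) * ((∏ i ∈ range m, (m+2+i) : ℕ) : ℝ)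
        = ((2*m+1).factorial : ℝ) := by
      have := fact_mul_prod (m+1) m
      have h2 : m + 1 + m = 2*m+1 := by omega
      rw [h2] at this
      exact_mod_cast this
    have e1 : (m+1+(m+1)).factorial = (2*m+2) * (2*m+1).factorial := by
      have : m+1+(m+1) = (2*m+1)+1 := by omega
      rw [this, Nat.factorial_succ]
    have e2 : (m+1).factorial = (m+1) * m.factorial := Nat.factorial_succ m
    have hQpos : (0:ℝ) < ((∏ i ∈ range m, (m+2+i) : ℕ) : ℝ) := by
      have : 0 < ∏ i ∈ range m, (m+2+i) := Finset.prod_pos (fun i _ => by omega)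
      exact_mod_cast this
    have hfm : (0:ℝ) < (m.factorial : ℝ) := by exact_mod_cast m.factorial_pos
    have hf2m : (0:ℝ) < ((2*m+1).factorial : ℝ) := by exact_mod_cast (2*m+1).factorial_pos
    have hsub : m + 1 - (m+1) = 0 := by omega
    rw [hsub, e1]
    set Q := ((∏ i ∈ range m, (m+2+i) : ℕ) : ℝ) with hQ
    have hm1 : ((m+1).factorial : ℝ) = ((m:ℝ)+1) * (m.factorial:ℝ) := by
      rw [e2]; push_cast; ring
    have hkey' : (((m:ℝ)+1) * (m.factorial:ℝ)) * Q = ((2*m+1).factorial : ℝ) := by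
      rw [← hm1]; exact hkey
    have hme : (-1:ℝ)^(m+1+1) = (-1)^m := by
      rw [pow_succ, pow_succ]; ring
    have hQval : Q = ((2*m+1).factorial : ℝ) / (((m:ℝ)+1) * (m.factorial:ℝ)) := by
      rw [eq_div_iff (by positivity)]
      linarith [hkey']
    push_cast
    rw [hm1, hQval, hme]
    have hne : ((-1:ℝ)^m) ≠ 0 := pow_ne_zero m (by norm_num)
    have h2 : ((-1:ℝ))^(m*2) = 1 := by rw [mul_comm, pow_mul]; norm_num
    field_simp
    ring_nf
    simp only [h2]
  · -- inductive step
    intro n hn ih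
    rw [Finset.prod_range_succ, ih]
    have hne : n + 1 ≠ j := by omega
    have hjn : (j:ℝ) ≤ (n:ℝ) := by exact_mod_cast hn
    have hj1 : (1:ℝ) ≤ (j:ℝ) := by exact_mod_cast hj
    have hg : gfun j (n+1) = ((n:ℝ)+1)^2 / (((n:ℝ)+1)^2 - (j:ℝ)^2) := by
      simp only [gfun, if_neg hne]
      rw [one_sub_div (by positivity), inv_div]
      push_cast
      ring_nf
    have e1 : ((n+1-j).factorial:ℝ) = (((n:ℝ)+1) - (j:ℝ)) * ((n-j).factorial:ℝ) := by
      have h : n+1-j = (n-j)+1 := by omega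
      rw [h, Nat.factorial_succ]
      push_cast [Nat.cast_sub hn]
      ring
    have e2 : ((n+1+j).factorial:ℝ) = (((n:ℝ)+1) + (j:ℝ)) * ((n+j).factorial:ℝ) := by
      have h : n+1+j = (n+j)+1 := by omega
      rw [h, Nat.factorial_succ]
      push_cast
      ring
    have e3 : ((n+1).factorial:ℝ) = ((n:ℝ)+1) * (n.factorial:ℝ) := by
      rw [Nat.factorial_succ]; push_cast; ring
    rw [hg, e1, e2, e3]
    have hd : ((n:ℝ)+1)^2 - (j:ℝ)^2 ≠ 0 := by nlinarith
    have ha : ((n:ℝ)+1) - (j:ℝ) ≠ 0 := by nlinarith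
    have hb : ((n:ℝ)+1) + (j:ℝ) ≠ 0 := by nlinarith
    have hc : (n:ℝ)+1 ≠ 0 := by positivity
    have hf1 : ((n-j).factorial:ℝ) ≠ 0 := by
      exact_mod_cast (n-j).factorial_pos.ne'
    have hf2 : ((n+j).factorial:ℝ) ≠ 0 := by
      exact_mod_cast (n+j).factorial_pos.ne'
    field_simp
    ring

lemma tendsto_T (j : ℕ) (hj : 1 ≤ j) :
    Tendsto (fun n : ℕ =>
        (n.factorial:ℝ)^2 / (((n-j).factorial:ℝ) * ((n+j).factorial:ℝ)))
      atTop (𝓝 1) := by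
  have key : Tendsto (fun n : ℕ =>
      ∏ i ∈ range j, (((n:ℝ) - (j:ℝ) + 1 + (i:ℝ))/((n:ℝ)+1+(i:ℝ)))) atTop (𝓝 1) := by
    have h1 : (1:ℝ) = ∏ _i ∈ range j, (1:ℝ) := by simp
    rw [h1]
    apply tendsto_finset_prod
    intro i _
    have hden : Tendsto (fun n : ℕ => (n:ℝ)+1+(i:ℝ)) atTop atTop :=
      tendsto_atTop_add_const_right _ _
        (tendsto_atTop_add_const_right _ _ tendsto_natCast_atTop_atTop)
    have h2 : Tendsto (fun n : ℕ => ((n:ℝ)+1+(i:ℝ))⁻¹) atTop (𝓝 0) :=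
      hden.inv_tendsto_atTop
    have h3 : Tendsto (fun n : ℕ => (j:ℝ) * ((n:ℝ)+1+(i:ℝ))⁻¹) atTop (𝓝 0) := by
      simpa using h2.const_mul (j:ℝ)
    have h4 : Tendsto (fun n : ℕ => 1 - (j:ℝ) * ((n:ℝ)+1+(i:ℝ))⁻¹) atTop (𝓝 1) := by
      simpa using tendsto_const_nhds.sub h3
    apply h4.congr
    intro n
    have hne : (n:ℝ)+1+(i:ℝ) ≠ 0 := by positivity
    simp only [Finset.prod_const_one]
    field_simp
    ring
  apply key.congr'
  filter_upwards [eventually_ge_atTop j] with n hn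
  have hA : ((n-j).factorial) * ∏ i ∈ range j, ((n-j) + 1 + i) = n.factorial := by
    have := fact_mul_prod (n-j) j
    rwa [Nat.sub_add_cancel hn] at this
  have hB : (n.factorial) * ∏ i ∈ range j, (n + 1 + i) = (n+j).factorial :=
    fact_mul_prod n j
  have hfn : ((n-j).factorial:ℝ) ≠ 0 := by exact_mod_cast (n-j).factorial_pos.ne'
  have hfn2 : (n.factorial:ℝ) ≠ 0 := by exact_mod_cast n.factorial_pos.ne'
  have hA' : ((∏ i ∈ range j, ((n-j) + 1 + i) : ℕ) : ℝ)
      = (n.factorial:ℝ) / ((n-j).factorial:ℝ) := by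
    rw [eq_div_iff hfn, mul_comm]
    exact_mod_cast hA
  have hB' : ((∏ i ∈ range j, (n + 1 + i) : ℕ) : ℝ)
      = ((n+j).factorial:ℝ) / (n.factorial:ℝ) := by
    rw [eq_div_iff hfn2, mul_comm]
    exact_mod_cast hB
  have c1 : ∏ i ∈ range j, ((n:ℝ) - (j:ℝ) + 1 + (i:ℝ))
      = ((∏ i ∈ range j, ((n-j)+1+i) : ℕ) : ℝ) := by
    rw [Nat.cast_prod]
    refine Finset.prod_congr rfl fun i _ => ?_
    push_cast [Nat.cast_sub hn]
    ring
  have c2 : ∏ i ∈ range j, ((n:ℝ)+1+(i:ℝ))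
      = ((∏ i ∈ range j, (n+1+i) : ℕ) : ℝ) := by
    rw [Nat.cast_prod]
    refine Finset.prod_congr rfl fun i _ => ?_
    push_cast
    ring
  rw [Finset.prod_div_distrib, c1, c2, hA', hB']
  have hfn3 : ((n+j).factorial:ℝ) ≠ 0 := by exact_mod_cast (n+j).factorial_pos.ne'
  field_simp

lemma gfun_ne_zero (j : ℕ) (hj : 1 ≤ j) (k : ℕ) : gfun j k ≠ 0 := by
  unfold gfun
  by_cases h : k = j
  · simp [h]
  · rw [if_neg h]
    rcases Nat.eq_zero_or_pos k with hk | hk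
    · subst hk; norm_num
    · have hkj : (k:ℝ)^2 ≠ (j:ℝ)^2 := by
        intro hjk
        have hc : ((k:ℝ)) = (j:ℝ) := by
          nlinarith [(Nat.cast_pos (α := ℝ)).mpr hk, (Nat.cast_pos (α := ℝ)).mpr hj]
        exact h (by exact_mod_cast hc)
      have hk0 : ((k:ℝ))^2 ≠ 0 := by positivity
      have hbase : 1 - (j:ℝ)^2/(k:ℝ)^2 ≠ 0 := by
        intro hz
        apply hkj
        have h1 : (j:ℝ)^2/(k:ℝ)^2 = 1 := by linarith
        rw [div_eq_one_iff_eq hk0] at h1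
        linarith
      exact inv_ne_zero hbase

lemma gfun_pos_of_gt (j : ℕ) (hj : 1 ≤ j) {k : ℕ} (hk : j < k) : 0 < gfun j k := by
  have hne : k ≠ j := by omega
  unfold gfun
  rw [if_neg hne]
  have hkpos : (0:ℝ) < (k:ℝ)^2 := by
    have : (0:ℕ) < k := by omega
    have : (0:ℝ) < (k:ℝ) := by exact_mod_cast this
    positivity
  have h1 : (j:ℝ)^2 / (k:ℝ)^2 < 1 := by
    rw [div_lt_one hkpos]
    have : (j:ℝ) < k := by exact_mod_cast hk
    nlinarith [Nat.cast_nonneg j (α := ℝ)]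
  have h0 : 0 < 1 - (j:ℝ)^2/(k:ℝ)^2 := by linarith
  exact inv_pos.mpr h0

lemma gfun_neg_of_lt (j : ℕ) {k : ℕ} (h1 : 1 ≤ k) (h2 : k < j) : gfun j k < 0 := by
  have hne : k ≠ j := by omega
  unfold gfun
  rw [if_neg hne]
  have hk : (1:ℝ) ≤ (k:ℝ) := by exact_mod_cast h1
  have hkj : (k:ℝ) < j := by exact_mod_cast h2
  have h3 : 1 < (j:ℝ)^2 / (k:ℝ)^2 := by
    rw [lt_div_iff₀ (by positivity)]
    nlinarith
  have : 1 - (j:ℝ)^2/(k:ℝ)^2 < 0 := by linarith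
  exact inv_lt_zero.mpr this

noncomputable def efun (j : ℕ) : ℕ → ℝ :=
  fun k => if 1 ≤ k ∧ k < j then (-1:ℝ) else 1

lemma gfun_eq_abs_mul (j : ℕ) (hj : 1 ≤ j) (k : ℕ) :
    gfun j k = |gfun j k| * efun j k := by
  unfold efun
  by_cases h : 1 ≤ k ∧ k < j
  · rw [if_pos h]
    have := gfun_neg_of_lt j h.1 h.2
    rw [abs_of_neg this]; ring
  · rw [if_neg h, mul_one]
    rcases Nat.lt_or_ge k j with hlt | hge
    · -- then k = 0
      have hk0 : k = 0 := by omega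
      subst hk0
      have : gfun j 0 = 1 := by simp [gfun]
      rw [this]; norm_num
    · rcases Nat.eq_or_lt_of_le hge with heq | hlt'
      · rw [← heq]
        have : gfun j j = 1 := by simp [gfun]
        rw [this]; norm_num
      · rw [abs_of_pos (gfun_pos_of_gt j hj hlt')]

lemma summable_log_abs (j : ℕ) (hj : 1 ≤ j) :
    Summable (fun k : ℕ => Real.log |gfun j k|) := by
  rw [← summable_nat_add_iff (2*j+1)]
  have hsummable : Summable (fun n : ℕ => 2*(j:ℝ)^2 * (1/((n:ℝ)+1)^2)) := by
    apply Summable.mul_left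
    have h := (Real.summable_one_div_nat_pow (p := 2)).mpr one_lt_two
    have h2 := (summable_nat_add_iff 1).mpr h
    apply h2.congr
    intro n
    push_cast
    ring
  apply Summable.of_nonneg_of_le ?_ ?_ hsummable
  · intro n
    set m := n + (2*j+1) with hm
    have hmj : j < m := by omega
    have h1 : (1:ℝ) ≤ gfun j m := by
      have hne : m ≠ j := by omega
      unfold gfun
      rw [if_neg hne]
      have hkpos : (0:ℝ) < (m:ℝ)^2 := by
        have : (0:ℝ) < (m:ℝ) := by exact_mod_cast (by omega : 0 < m)
        positivity
      have hlt : (j:ℝ)^2/(m:ℝ)^2 < 1 := by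
        rw [div_lt_one hkpos]
        have : (j:ℝ) < m := by exact_mod_cast hmj
        nlinarith [Nat.cast_nonneg j (α := ℝ)]
      have hnn : (0:ℝ) ≤ (j:ℝ)^2/(m:ℝ)^2 := by positivity
      rw [one_le_inv_iff₀]
      constructor <;> linarith
    rw [abs_of_pos (by linarith : (0:ℝ) < gfun j m)]
    exact Real.log_nonneg h1
  · intro n
    set m := n + (2*j+1) with hm
    have hmj : j < m := by omega
    have hmn : (n:ℝ) + 1 ≤ (m:ℝ) := by
      have : n + 1 ≤ m := by omega
      exact_mod_cast this
    have hne : m ≠ j := by omega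
    have hmpos : (0:ℝ) < (m:ℝ) := by exact_mod_cast (by omega : 0 < m)
    have hm2 : (0:ℝ) < (m:ℝ)^2 := by positivity
    set x := (j:ℝ)^2/(m:ℝ)^2 with hx
    have hxpos : 0 < x := by
      have : (0:ℝ) < (j:ℝ) := by exact_mod_cast hj
      positivity
    have hxq : x ≤ 1/4 := by
      rw [hx, div_le_div_iff₀ hm2 (by norm_num)]
      have h2jm : 2*(j:ℝ) < (m:ℝ) := by exact_mod_cast (by omega : 2*j < m)
      nlinarith [Nat.cast_nonneg j (α := ℝ)]
    have hgm : gfun j m = (1 - x)⁻¹ := by unfold gfun; rw [if_neg hne]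
    have h1x : (0:ℝ) < 1 - x := by linarith
    have hgpos : 0 < gfun j m := by rw [hgm]; positivity
    rw [abs_of_pos hgpos]
    have hlog : Real.log (gfun j m) ≤ gfun j m - 1 :=
      Real.log_le_sub_one_of_pos hgpos
    have hval : gfun j m - 1 = x / (1 - x) := by
      rw [hgm]; field_simp; ring
    have hbound : x / (1-x) ≤ 2*x := by
      rw [div_le_iff₀ h1x]
      nlinarith
    have hxle : 2*x ≤ 2*(j:ℝ)^2 * (1/((n:ℝ)+1)^2) := by
      have hn1 : (0:ℝ) < (n:ℝ)+1 := by positivity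
      have hsq : ((n:ℝ)+1)^2 ≤ (m:ℝ)^2 := by nlinarith
      have hdd : (j:ℝ)^2/(m:ℝ)^2 ≤ (j:ℝ)^2/((n:ℝ)+1)^2 :=
        div_le_div_of_nonneg_left (by positivity) (by positivity) hsq
      rw [hx]
      have hr : 2*(j:ℝ)^2 * (1/((n:ℝ)+1)^2) = 2*((j:ℝ)^2/((n:ℝ)+1)^2) := by ring
      rw [hr]
      linarith
    calc Real.log (gfun j m) ≤ gfun j m - 1 := hlog
      _ = x / (1-x) := hval
      _ ≤ 2*x := hbound
      _ ≤ _ := hxle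

lemma multipliable_gfun (j : ℕ) (hj : 1 ≤ j) : Multipliable (gfun j) := by
  have ha : Multipliable (fun k : ℕ => |gfun j k|) := by
    apply Real.multipliable_of_summable_log (hfn := fun k => abs_pos.mpr (gfun_ne_zero j hj k))
    exact summable_log_abs j hj
  have he : Multipliable (efun j) := by
    refine ⟨∏ k ∈ range j, efun j k, hasProd_prod_of_ne_finset_one ?_⟩
    intro k hk
    rw [Finset.mem_range, not_lt] at hk
    unfold efun
    rw [if_neg (by omega)]
  have hmul : Multipliable (fun k => |gfun j k| * efun j k) := ha.mul he
  have heq : (fun k => |gfun j k| * efun j k) = gfun j :=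
    funext fun k => (gfun_eq_abs_mul j hj k).symm
  rwa [heq] at hmul

lemma tprod_gfun (j : ℕ) (hj : 1 ≤ j) :
    (∏' k : ℕ, gfun j k) = 2 * (-1:ℝ)^(j+1) := by
  have hm := multipliable_gfun j hj
  have ht : Tendsto (fun n => ∏ k ∈ range n, gfun j k) atTop
      (𝓝 (2 * (-1:ℝ)^(j+1))) := by
    rw [← tendsto_add_atTop_iff_nat 1]
    have hT := (tendsto_T j hj).const_mul (2 * (-1:ℝ)^(j+1))
    rw [mul_one] at hT
    apply hT.congr'
    filter_upwards [eventually_ge_atTop j] with n hn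
    exact (closed_form j hj n hn).symm
  exact tendsto_nhds_unique hm.hasProd.tendsto_prod_nat ht

/-- For every positive integer `j`,
`∏_{k ≥ 1, k ≠ j} (1 - j²/k²)⁻¹ = 2·(-1)^(j+1)`. -/
theorem stmt2 (j : ℕ) (hj : 1 ≤ j) :
    (∏' k : {k : ℕ // 1 ≤ k ∧ k ≠ j}, (1 - (j : ℝ) ^ 2 / ((k : ℕ) : ℝ) ^ 2)⁻¹) =
      2 * (-1 : ℝ) ^ (j + 1) := by
  have h := tprod_subtype {k : ℕ | 1 ≤ k ∧ k ≠ j}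
    (fun k : ℕ => (1 - (j : ℝ) ^ 2 / (k : ℝ) ^ 2)⁻¹)
  have hind : Set.mulIndicator {k : ℕ | 1 ≤ k ∧ k ≠ j}
      (fun k : ℕ => (1 - (j : ℝ) ^ 2 / (k : ℝ) ^ 2)⁻¹) = gfun j := by
    funext k
    by_cases hk : k ∈ {k : ℕ | 1 ≤ k ∧ k ≠ j}
    · rw [Set.mulIndicator_of_mem hk]
      have : k ≠ j := hk.2
      unfold gfun
      rw [if_neg this]
    · rw [Set.mulIndicator_of_notMem hk]
      simp only [Set.mem_setOf_eq, not_and_or, not_le, not_ne_iff] at hk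
      rcases hk with hk | hk
      · have hk0 : k = 0 := by omega
        subst hk0
        simp [gfun]
      · subst hk
        simp [gfun]
  rw [hind] at h
  exact h.trans (tprod_gfun j hj)
end

section
/- If j² ≠ n² + γₙ, then K(n,j) = (-1)^{j+1}·(2nj/(j² - n² - γₙ))·sinc(π√(n² + γₙ)), where K(n,j) = (n/j)·∏_{k≠j}(1 - (n² + γₙ)/k²)·∏_{k≠j}(1 - j²/k²)^{-1} and sinc(z) = sin(z)/z (with sinc(0) = 1). -/
open Real Complex Filter Finset Topology Nat

private lemma fact_prod_aux (a b : ℕ) :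
    (a + b)! = a ! * ∏ i ∈ Finset.range b, (a + 1 + i) := by
  induction b with
  | zero => simp
  | succ b ih =>
      rw [Finset.prod_range_succ, ← mul_assoc, ← ih]
      rw [show a + (b + 1) = (a + b) + 1 by ring, Nat.factorial_succ]
      ring

private lemma prod_sub_eq_factorial (m : ℕ) :
    ∏ k ∈ Finset.range m, (m - k) = m ! := by
  rw [← Finset.prod_range_add_one_eq_factorial m,
    ← Finset.prod_range_reflect (fun j => j + 1) m]
  exact Finset.prod_congr rfl fun k hk => by
    rw [Finset.mem_range] at hk; omega

private lemma hasProd_zero_of_zero {ι : Type*} {f : ι → ℂ} (i : ι) (h : f i = 0) :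
    HasProd f 0 := by
  have hev : ∀ᶠ s : Finset ι in Filter.atTop, (0 : ℂ) = ∏ k ∈ s, f k := by
    filter_upwards [Filter.eventually_ge_atTop {i}] with s hs
    exact (Finset.prod_eq_zero (Finset.singleton_subset_iff.mp hs) h).symm
  exact Filter.Tendsto.congr' hev tendsto_const_nhds

private lemma multipliable_aux (f : ℕ → ℂ) (C : ℝ) (hf : ∀ k, f k ≠ 0)
    (hb : ∀ᶠ k in Filter.atTop, ‖f k - 1‖ ≤ C / (k : ℝ) ^ 2) : Multipliable f := by
  have hs0 : Summable (fun k : ℕ => 1 / (k : ℝ) ^ 2) :=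
    summable_one_div_nat_pow.mpr one_lt_two
  have hsum : Summable (fun k : ℕ => C / (k : ℝ) ^ 2) := by
    simpa [div_eq_mul_inv, one_div] using hs0.mul_left C
  have hsmall : ∀ᶠ k : ℕ in Filter.atTop, C / (k : ℝ) ^ 2 ≤ 1 / 2 :=
    hsum.tendsto_atTop_zero.eventually (eventually_le_nhds (show (0:ℝ) < 1/2 by norm_num))
  apply Complex.multipliable_of_summable_log
  apply Summable.of_norm_bounded_eventually_nat (g := fun k => 3 / 2 * (C / (k : ℝ) ^ 2))
    (by simpa [div_eq_mul_inv, one_div, mul_assoc] using hs0.mul_left (3 / 2 * C))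
  filter_upwards [hb, hsmall] with k h1 h2
  have h3 : ‖f k - 1‖ ≤ 1 / 2 := h1.trans h2
  have := Complex.norm_log_one_add_half_le_self h3
  rw [show (1 : ℂ) + (f k - 1) = f k by ring] at this
  exact this.trans (by nlinarith [norm_nonneg (f k - 1)])

private lemma tendsto_ratio (a b : ℝ) (hb : 0 < b) :
    Filter.Tendsto (fun m : ℕ => ((m : ℝ) + a) / ((m : ℝ) + b)) Filter.atTop (𝓝 1) := by
  have h1 : Filter.Tendsto (fun m : ℕ => (m : ℝ) + b) Filter.atTop Filter.atTop :=
    Filter.tendsto_atTop_add_const_right _ b tendsto_natCast_atTop_atTop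
  have h2 : Filter.Tendsto (fun m : ℕ => 1 + (a - b) / ((m : ℝ) + b)) Filter.atTop (𝓝 1) := by
    have := (Filter.Tendsto.div_atTop (tendsto_const_nhds (x := a - b)) h1).const_add 1
    rwa [add_zero] at this
  apply h2.congr
  intro m
  have hm : (m : ℝ) + b ≠ 0 := by positivity
  field_simp
  ring

private lemma tendsto_factorial_ratio (j : ℕ) :
    Filter.Tendsto (fun m : ℕ => ((j + m)! : ℝ) ^ 2 / ((m ! : ℝ) * ((2 * j + m)! : ℝ)))
      Filter.atTop (𝓝 1) := by
  have key : ∀ m : ℕ, ((j + m)! : ℝ) ^ 2 / ((m ! : ℝ) * ((2 * j + m)! : ℝ))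
      = ∏ i ∈ Finset.range j, (((m : ℝ) + (1 + (i : ℝ))) / ((m : ℝ) + ((j : ℝ) + 1 + (i : ℝ)))) := by
    intro m
    have h1 : ((j + m)! : ℝ) = (m ! : ℝ) * ∏ i ∈ Finset.range j, ((m : ℝ) + (1 + (i : ℝ))) := by
      have h := congrArg (fun t : ℕ => (t : ℝ)) (fact_prod_aux m j)
      simp only [Nat.cast_mul, Nat.cast_prod, Nat.cast_add, Nat.cast_one] at h
      rw [Nat.add_comm j m, h]
      exact congrArg _ (Finset.prod_congr rfl fun i _ => by ring)
    have h2 : ((2 * j + m)! : ℝ)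
        = ((j + m)! : ℝ) * ∏ i ∈ Finset.range j, ((m : ℝ) + ((j : ℝ) + 1 + (i : ℝ))) := by
      have h := congrArg (fun t : ℕ => (t : ℝ)) (fact_prod_aux (j + m) j)
      simp only [Nat.cast_mul, Nat.cast_prod, Nat.cast_add, Nat.cast_one] at h
      rw [show 2 * j + m = j + m + j by ring, h]
      exact congrArg _ (Finset.prod_congr rfl fun i _ => by ring)
    have hA : (0 : ℝ) < ∏ i ∈ Finset.range j, ((m : ℝ) + (1 + (i : ℝ))) :=
      Finset.prod_pos fun i _ => by positivity
    have hB : (0 : ℝ) < ∏ i ∈ Finset.range j, ((m : ℝ) + ((j : ℝ) + 1 + (i : ℝ))) :=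
      Finset.prod_pos fun i _ => by positivity
    have hm : (0 : ℝ) < (m ! : ℝ) := by exact_mod_cast Nat.factorial_pos m
    rw [Finset.prod_div_distrib, h2, h1]
    field_simp
  have h0 : Filter.Tendsto
      (fun m : ℕ => ∏ i ∈ Finset.range j,
        (((m : ℝ) + (1 + (i : ℝ))) / ((m : ℝ) + ((j : ℝ) + 1 + (i : ℝ)))))
      Filter.atTop (𝓝 (∏ _i ∈ Finset.range j, (1 : ℝ))) :=
    tendsto_finset_prod _ fun i _ => tendsto_ratio (1 + (i : ℝ)) ((j : ℝ) + 1 + (i : ℝ))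
      (by positivity)
  rw [Finset.prod_const_one] at h0
  exact h0.congr fun m => (key m).symm

private lemma alg_final (t a P1 P2 P3 d u : ℂ) (ha : a ≠ 0) (hP1 : P1 ≠ 0)
    (hP3 : P3 ≠ 0) (hd : d ≠ 0) (hu : u ≠ 0) :
    t * (a ^ 2 / (a * P1)) * (P2 ^ 2 / (d * P3))
      = t * 2 * ((u * a) * P2) ^ 2 / (d * ((2 * u) * ((u * a) * P1) * P3)) := by
  have h2ua : (2 : ℂ) * u ^ 2 * a ≠ 0 :=
    mul_ne_zero (mul_ne_zero two_ne_zero (pow_ne_zero _ hu)) ha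
  rw [sq a, mul_div_mul_left _ _ ha,
    show t * 2 * ((u * a) * P2) ^ 2 = (2 * u ^ 2 * a) * (t * a * P2 ^ 2) by ring,
    show d * ((2 * u) * ((u * a) * P1) * P3) = (2 * u ^ 2 * a) * (P1 * (d * P3)) by ring,
    mul_div_mul_left _ _ h2ua, mul_assoc]
  rw [_root_.div_mul_div_comm]
  rw [mul_div_assoc']
  congr 1
  ring

private lemma prod_v_eval (J m : ℕ) :
    (∏ k ∈ Finset.range (J + 1 + 1 + m),
        (if k = J + 1 then (1 : ℂ)
          else (1 - ((J + 1 : ℕ) : ℂ) ^ 2 / ((k : ℕ) : ℂ) ^ 2)⁻¹))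
      = (-1) ^ J * 2 * (((J + 1 + m)! : ℕ) : ℂ) ^ 2 /
          (((m ! : ℕ) : ℂ) * (((2 * (J + 1) + m)! : ℕ) : ℂ)) := by
  set v : ℕ → ℂ :=
    fun k => if k = J + 1 then (1 : ℂ)
      else (1 - ((J + 1 : ℕ) : ℂ) ^ 2 / ((k : ℕ) : ℂ) ^ 2)⁻¹ with hv
  -- head
  have h0 : v 0 = 1 := by
    have : (0 : ℕ) ≠ J + 1 := by omega
    simp [hv, this]
  have hJ1 : v (J + 1) = 1 := by simp [hv]
  have hfac : ∀ k ∈ Finset.range J, v (k + 1)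
      = ((k + 1 : ℕ) : ℂ) ^ 2 /
        ((-1) * (((J - k : ℕ) : ℂ) * ((J + 1 + 1 + k : ℕ) : ℂ))) := by
    intro k hk
    rw [Finset.mem_range] at hk
    have h1 : k + 1 ≠ J + 1 := by omega
    have hc : ((k + 1 : ℕ) : ℂ) ≠ 0 := Nat.cast_ne_zero.mpr (Nat.succ_ne_zero k)
    have hsub : ((J - k : ℕ) : ℂ) = (J : ℂ) - (k : ℂ) := by
      push_cast [Nat.cast_sub hk.le]; ring
    have hd : (-1) * (((J - k : ℕ) : ℂ) * ((J + 1 + 1 + k : ℕ) : ℂ))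
        = ((k + 1 : ℕ) : ℂ) ^ 2 - ((J + 1 : ℕ) : ℂ) ^ 2 := by
      rw [hsub]; push_cast; ring
    have hd0 : ((k + 1 : ℕ) : ℂ) ^ 2 - ((J + 1 : ℕ) : ℂ) ^ 2 ≠ 0 := by
      rw [← hd]
      have h2 : ((J - k : ℕ) : ℂ) ≠ 0 := Nat.cast_ne_zero.mpr (by omega)
      have h3 : ((J + 1 + 1 + k : ℕ) : ℂ) ≠ 0 := Nat.cast_ne_zero.mpr (by omega)
      exact mul_ne_zero (by norm_num) (mul_ne_zero h2 h3)
    simp only [hv, if_neg h1]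
    rw [hd]
    rw [show (1 : ℂ) - ((J + 1 : ℕ) : ℂ) ^ 2 / ((k + 1 : ℕ) : ℂ) ^ 2
        = (((k + 1 : ℕ) : ℂ) ^ 2 - ((J + 1 : ℕ) : ℂ) ^ 2) / ((k + 1 : ℕ) : ℂ) ^ 2 by
      rw [sub_div, div_self (pow_ne_zero 2 hc)]]
    rw [inv_div]
  have hnum : ∏ k ∈ Finset.range J, ((k + 1 : ℕ) : ℂ) = ((J ! : ℕ) : ℂ) := by
    rw [← Nat.cast_prod, Finset.prod_range_add_one_eq_factorial]
  have hsubprod : ∏ k ∈ Finset.range J, ((J - k : ℕ) : ℂ) = ((J ! : ℕ) : ℂ) := by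
    rw [← Nat.cast_prod, prod_sub_eq_factorial]
  have hB : (((J + 1)! : ℕ) : ℂ) * ∏ k ∈ Finset.range J, ((J + 1 + 1 + k : ℕ) : ℂ)
      = (((J + 1 + J)! : ℕ) : ℂ) := by
    rw [← Nat.cast_prod, ← Nat.cast_mul, ← fact_prod_aux (J + 1) J]
  have hhead : ∏ k ∈ Finset.range (J + 1 + 1), v k
      = ((J ! : ℕ) : ℂ) ^ 2 /
        ((-1) ^ J * (((J ! : ℕ) : ℂ) * ∏ k ∈ Finset.range J, ((J + 1 + 1 + k : ℕ) : ℂ))) := by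
    rw [Finset.prod_range_succ, hJ1, mul_one, Finset.prod_range_succ', h0, mul_one]
    rw [Finset.prod_congr rfl hfac, Finset.prod_div_distrib, Finset.prod_pow, hnum,
      Finset.prod_mul_distrib, Finset.prod_const, Finset.prod_mul_distrib, hsubprod,
      Finset.card_range]
  
  have hfac2 : ∀ i ∈ Finset.range m, v (J + 1 + 1 + i)
      = ((J + 1 + 1 + i : ℕ) : ℂ) ^ 2 /
        (((i + 1 : ℕ) : ℂ) * ((2 * (J + 1) + 1 + i : ℕ) : ℂ)) := by
    intro i _
    have h1 : J + 1 + 1 + i ≠ J + 1 := by omega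
    have hc : ((J + 1 + 1 + i : ℕ) : ℂ) ≠ 0 := Nat.cast_ne_zero.mpr (by omega)
    have hd : ((i + 1 : ℕ) : ℂ) * ((2 * (J + 1) + 1 + i : ℕ) : ℂ)
        = ((J + 1 + 1 + i : ℕ) : ℂ) ^ 2 - ((J + 1 : ℕ) : ℂ) ^ 2 := by push_cast; ring
    have hd0 : ((J + 1 + 1 + i : ℕ) : ℂ) ^ 2 - ((J + 1 : ℕ) : ℂ) ^ 2 ≠ 0 := by
      rw [← hd]
      exact mul_ne_zero (Nat.cast_ne_zero.mpr (by omega)) (Nat.cast_ne_zero.mpr (by omega))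
    simp only [hv, if_neg h1]
    rw [show ((i + 1 : ℕ) : ℂ) * ((2 * (J + 1) + 1 + i : ℕ) : ℂ)
        = ((J + 1 + 1 + i : ℕ) : ℂ) ^ 2 - ((J + 1 : ℕ) : ℂ) ^ 2 from hd]
    rw [show (1 : ℂ) - ((J + 1 : ℕ) : ℂ) ^ 2 / ((J + 1 + 1 + i : ℕ) : ℂ) ^ 2
        = (((J + 1 + 1 + i : ℕ) : ℂ) ^ 2 - ((J + 1 : ℕ) : ℂ) ^ 2) /
          ((J + 1 + 1 + i : ℕ) : ℂ) ^ 2 by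
      rw [sub_div, div_self (pow_ne_zero 2 hc)]]
    rw [inv_div]
  have hDen : ∏ i ∈ Finset.range m, ((i + 1 : ℕ) : ℂ) = ((m ! : ℕ) : ℂ) := by
    rw [← Nat.cast_prod, Finset.prod_range_add_one_eq_factorial]
  have hC : (((J + 1)! : ℕ) : ℂ) * ∏ i ∈ Finset.range m, ((J + 1 + 1 + i : ℕ) : ℂ)
      = (((J + 1 + m)! : ℕ) : ℂ) := by
    rw [← Nat.cast_prod, ← Nat.cast_mul, ← fact_prod_aux (J + 1) m]
  have hE : (((2 * (J + 1))! : ℕ) : ℂ) *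
        ∏ i ∈ Finset.range m, ((2 * (J + 1) + 1 + i : ℕ) : ℂ)
      = (((2 * (J + 1) + m)! : ℕ) : ℂ) := by
    rw [← Nat.cast_prod, ← Nat.cast_mul, ← fact_prod_aux (2 * (J + 1)) m]
  have htail : ∏ i ∈ Finset.range m, v (J + 1 + 1 + i)
      = (∏ i ∈ Finset.range m, ((J + 1 + 1 + i : ℕ) : ℂ)) ^ 2 /
        (((m ! : ℕ) : ℂ) * ∏ i ∈ Finset.range m, ((2 * (J + 1) + 1 + i : ℕ) : ℂ)) := by
    rw [Finset.prod_congr rfl hfac2, Finset.prod_div_distrib, Finset.prod_pow,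
      Finset.prod_mul_distrib, hDen]
  have hfne : ∀ t : ℕ, ((t ! : ℕ) : ℂ) ≠ 0 :=
    fun t => Nat.cast_ne_zero.mpr (Nat.factorial_ne_zero t)
  have hPB : ∏ k ∈ Finset.range J, ((J + 1 + 1 + k : ℕ) : ℂ)
      = (((J + 1 + J)! : ℕ) : ℂ) / (((J + 1)! : ℕ) : ℂ) := by
    rw [eq_div_iff (hfne (J + 1)), mul_comm]; exact hB
  have hPC : ∏ i ∈ Finset.range m, ((J + 1 + 1 + i : ℕ) : ℂ)
      = (((J + 1 + m)! : ℕ) : ℂ) / (((J + 1)! : ℕ) : ℂ) := by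
    rw [eq_div_iff (hfne (J + 1)), mul_comm]; exact hC
  have hPE : ∏ i ∈ Finset.range m, ((2 * (J + 1) + 1 + i : ℕ) : ℂ)
      = (((2 * (J + 1) + m)! : ℕ) : ℂ) / (((2 * (J + 1))! : ℕ) : ℂ) := by
    rw [eq_div_iff (hfne (2 * (J + 1))), mul_comm]; exact hE
  have hc1 : (((J + 1)! : ℕ) : ℂ) = ((J : ℂ) + 1) * ((J ! : ℕ) : ℂ) := by
    have := Nat.factorial_succ J
    push_cast [this]; ring
  have hc2 : (((2 * (J + 1))! : ℕ) : ℂ)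
      = (2 * ((J : ℂ) + 1)) * (((J + 1 + J)! : ℕ) : ℂ) := by
    have h := Nat.factorial_succ (J + 1 + J)
    rw [show 2 * (J + 1) = (J + 1 + J) + 1 by ring]
    push_cast [h]; ring
  have hm1 : ((-1 : ℂ)) ^ J ≠ 0 := pow_ne_zero _ (by norm_num)
  have hj1 : ((J : ℂ) + 1) ≠ 0 := by
    have : ((J + 1 : ℕ) : ℂ) ≠ 0 := Nat.cast_ne_zero.mpr (Nat.succ_ne_zero J)
    push_cast at this; exact this
  have hti : (((-1 : ℂ)) ^ J)⁻¹ = (-1) ^ J := by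
    rw [← inv_pow, inv_neg, inv_one]
  have hhead' : ∏ k ∈ Finset.range (J + 1 + 1), v k
      = (-1) ^ J * (((J ! : ℕ) : ℂ) ^ 2 /
          (((J ! : ℕ) : ℂ) * ∏ k ∈ Finset.range J, ((J + 1 + 1 + k : ℕ) : ℂ))) := by
    rw [hhead, div_mul_eq_div_div_swap, div_eq_mul_inv _ (((-1 : ℂ)) ^ J), hti]
    ring
  rw [Finset.prod_range_add, hhead', htail, ← hC, ← hE, hc2, ← hB, hc1]
  have hP1 : (∏ k ∈ Finset.range J, ((J + 1 + 1 + k : ℕ) : ℂ)) ≠ 0 :=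
    Finset.prod_ne_zero_iff.mpr fun k _ => Nat.cast_ne_zero.mpr (by omega)
  have hP3 : (∏ i ∈ Finset.range m, ((2 * (J + 1) + 1 + i : ℕ) : ℂ)) ≠ 0 :=
    Finset.prod_ne_zero_iff.mpr fun k _ => Nat.cast_ne_zero.mpr (by omega)
  exact alg_final _ _ _ _ _ _ _ (hfne J) hP1 hP3 (hfne m) hj1

private lemma alg_final2 (t a b c w : ℂ) (hb : b ≠ 0) (hc : c ≠ 0) :
    a / b * (w / (c / b ^ 2)) * (t * 2) = t * (2 * a * b / c) * w := by
  field_simp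

private lemma cast_sq_ne {k j : ℕ} (hk : k ≠ j) (hj : 1 ≤ j) :
    ((k : ℕ) : ℂ) ^ 2 ≠ ((j : ℕ) : ℂ) ^ 2 := by
  intro h
  have h2 : (((k : ℕ) : ℂ) - ((j : ℕ) : ℂ)) * (((k : ℕ) : ℂ) + ((j : ℕ) : ℂ)) = 0 := by
    linear_combination h
  rcases mul_eq_zero.mp h2 with h' | h'
  · exact hk (Nat.cast_injective (by linear_combination h'))
  · have : ((k + j : ℕ) : ℂ) = 0 := by push_cast; linear_combination h'
    have := Nat.cast_eq_zero.mp this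
    omega

/-- `G S` is the sequence `k ↦ 1 - S / k²` (equal to `1` at `k = 0`). -/
private noncomputable def Gf (S : ℂ) : ℕ → ℂ := fun k => 1 - S / ((k : ℕ) : ℂ) ^ 2

private lemma Gf_ne (S : ℂ) (hnz : ∀ m : ℕ, 1 ≤ m → ((m : ℕ) : ℂ) ^ 2 ≠ S) (k : ℕ) :
    Gf S k ≠ 0 := by
  rcases Nat.eq_zero_or_pos k with rfl | hk
  · simp [Gf]
  · intro h
    have hk0 : ((k : ℕ) : ℂ) ≠ 0 := Nat.cast_ne_zero.mpr (by omega)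
    apply hnz k hk
    have : S / ((k : ℕ) : ℂ) ^ 2 = 1 := by
      have := sub_eq_zero.mp h
      linear_combination -this
    exact ((div_eq_one_iff_eq (pow_ne_zero 2 hk0)).mp this).symm

private lemma Gf_bound (S : ℂ) : ∀ᶠ k : ℕ in Filter.atTop, ‖Gf S k - 1‖ ≤ ‖S‖ / (k : ℝ) ^ 2 := by
  filter_upwards [Filter.eventually_ge_atTop 1] with k hk
  have : Gf S k - 1 = -(S / ((k : ℕ) : ℂ) ^ 2) := by simp only [Gf]; ring
  rw [this, norm_neg, norm_div, norm_pow, Complex.norm_natCast]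

private lemma hasProd_Gf (S : ℂ) (g : ℂ → ℂ) (hg0 : g 0 = 1)
    (hgval : ∀ w : ℂ, w ≠ 0 →
      g (w ^ 2) = Complex.sin ((Real.pi : ℂ) * w) / ((Real.pi : ℂ) * w))
    (hnz : ∀ m : ℕ, 1 ≤ m → ((m : ℕ) : ℂ) ^ 2 ≠ S) :
    HasProd (Gf S) (g S) := by
  have hmult : Multipliable (Gf S) := multipliable_aux _ ‖S‖ (Gf_ne S hnz) (Gf_bound S)
  have hlim : Filter.Tendsto (fun N => ∏ k ∈ Finset.range N, Gf S k)
      Filter.atTop (𝓝 (g S)) := by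
    by_cases hS0 : S = 0
    · have hone : (fun N => ∏ k ∈ Finset.range N, Gf S k) = fun _ => 1 := by
        funext N
        exact Finset.prod_eq_one fun k _ => by simp [Gf, hS0]
      rw [hone, hS0, hg0]
      exact tendsto_const_nhds
    · obtain ⟨z, hz⟩ := IsAlgClosed.exists_pow_nat_eq S (n := 2) (by norm_num)
      have hz0 : z ≠ 0 := fun h => hS0 (by rw [← hz, h]; ring)
      have hpz : ((Real.pi : ℂ)) * z ≠ 0 :=
        mul_ne_zero (Complex.ofReal_ne_zero.mpr Real.pi_ne_zero) hz0
      have heuler := Complex.tendsto_euler_sin_prod z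
      have h2 := heuler.div_const (((Real.pi : ℂ)) * z)
      have h3 : Filter.Tendsto
          (fun N => ∏ k ∈ Finset.range N, ((1 : ℂ) - z ^ 2 / ((k : ℂ) + 1) ^ 2))
          Filter.atTop
          (𝓝 (Complex.sin ((Real.pi : ℂ) * z) / ((Real.pi : ℂ) * z))) := by
        apply h2.congr
        intro N
        rw [mul_comm, mul_div_assoc, div_self hpz, mul_one]
      have hgz : Complex.sin ((Real.pi : ℂ) * z) / ((Real.pi : ℂ) * z) = g S := by
        rw [← hgval z hz0, hz]
      rw [hgz] at h3
      have h4 : Filter.Tendsto (fun N => ∏ k ∈ Finset.range (N + 1), Gf S k)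
          Filter.atTop (𝓝 (g S)) := by
        apply h3.congr
        intro N
        rw [Finset.prod_range_succ']
        have hG0 : Gf S 0 = 1 := by simp [Gf]
        rw [hG0, mul_one]
        exact Finset.prod_congr rfl fun k _ => by
          simp only [Gf]
          rw [← hz]
          push_cast
          ring_nf
      exact (Filter.tendsto_add_atTop_iff_nat 1).mp h4
  have := hmult.hasProd
  rwa [tendsto_nhds_unique this.tendsto_prod_nat hlim] at this

private noncomputable def uf (S : ℂ) (j : ℕ) : ℕ → ℂ :=
  fun k => if k = j then 1 else Gf S k

private lemma tprod_uf (S : ℂ) (j : ℕ) (g : ℂ → ℂ) (hg0 : g 0 = 1)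
    (hgval : ∀ w : ℂ, w ≠ 0 →
      g (w ^ 2) = Complex.sin ((Real.pi : ℂ) * w) / ((Real.pi : ℂ) * w))
    (hnz : ∀ m : ℕ, 1 ≤ m → ((m : ℕ) : ℂ) ^ 2 ≠ S) :
    ∏' k, uf S j k = g S / Gf S j := by
  classical
  have hGprod := hasProd_Gf S g hg0 hgval hnz
  have humult : Multipliable (uf S j) := by
    apply multipliable_aux _ ‖S‖
    · intro k
      by_cases h : k = j
      · simp [uf, h]
      · simp only [uf, if_neg h]
        exact Gf_ne S hnz k
    · filter_upwards [Gf_bound S] with k hk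
      by_cases h : k = j
      · simp only [uf, if_pos h, sub_self, norm_zero]
        exact div_nonneg (norm_nonneg S) (by positivity)
      · simpa only [uf, if_neg h] using hk
  have hu := humult.hasProd
  have hmul := hu.mul (hasProd_ite_eq j (Gf S j))
  have hfun : (fun k => uf S j k * (if k = j then Gf S j else 1)) = Gf S := by
    funext k
    by_cases h : k = j
    · simp [uf, h]
    · simp [uf, h]
  rw [hfun] at hmul
  have hceq : (∏' k, uf S j k) * Gf S j = g S := hmul.unique hGprod
  rw [eq_div_iff (Gf_ne S hnz j)]
  exact hceq

private noncomputable def vf (j : ℕ) : ℕ → ℂ :=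
  fun k => if k = j then 1 else (1 - ((j : ℕ) : ℂ) ^ 2 / ((k : ℕ) : ℂ) ^ 2)⁻¹

private lemma one_sub_div_sq_ne (J k : ℕ) (hkj : k ≠ J + 1) :
    (1 : ℂ) - ((J + 1 : ℕ) : ℂ) ^ 2 / ((k : ℕ) : ℂ) ^ 2 ≠ 0 := by
  rcases Nat.eq_zero_or_pos k with rfl | hk
  · simp
  · intro hzero
    have hk0 : ((k : ℕ) : ℂ) ≠ 0 := Nat.cast_ne_zero.mpr (by omega)
    have h1 : ((J + 1 : ℕ) : ℂ) ^ 2 / ((k : ℕ) : ℂ) ^ 2 = 1 := by linear_combination -hzero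
    have h2 := (div_eq_one_iff_eq (pow_ne_zero 2 hk0)).mp h1
    exact cast_sq_ne (k := k) (j := J + 1) hkj (by omega) h2.symm

private lemma vf_ne (J : ℕ) : ∀ k, vf (J + 1) k ≠ 0 := by
  intro k
  by_cases h : k = J + 1
  · simp [vf, h]
  · simp only [vf, if_neg h]
    exact inv_ne_zero (one_sub_div_sq_ne J k h)

private lemma vf_bound (J : ℕ) :
    ∀ᶠ k : ℕ in Filter.atTop,
      ‖vf (J + 1) k - 1‖ ≤ 2 * ((J : ℝ) + 1) ^ 2 / (k : ℝ) ^ 2 := by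
  filter_upwards [Filter.eventually_ge_atTop (2 * (J + 1) + 1)] with k hk
  have hkj : k ≠ J + 1 := by omega
  have hk0 : ((k : ℕ) : ℂ) ≠ 0 := Nat.cast_ne_zero.mpr (by omega)
  have hkR : (0 : ℝ) < (k : ℝ) := by
    have : (0 : ℕ) < k := by omega
    exact_mod_cast this
  set x : ℂ := ((J + 1 : ℕ) : ℂ) ^ 2 / ((k : ℕ) : ℂ) ^ 2 with hx
  have hnormx : ‖x‖ = ((J : ℝ) + 1) ^ 2 / (k : ℝ) ^ 2 := by
    rw [hx, norm_div, norm_pow, norm_pow, Complex.norm_natCast, Complex.norm_natCast]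
    push_cast
    ring
  have hkge : 2 * ((J : ℝ) + 1) ≤ (k : ℝ) := by
    have : (2 * (J + 1) : ℕ) ≤ k := by omega
    exact_mod_cast this
  have hJ1 : (0 : ℝ) < (J : ℝ) + 1 := by positivity
  have hxhalf : ‖x‖ ≤ 1 / 2 := by
    rw [hnormx, div_le_iff₀ (by positivity)]
    nlinarith [sq_nonneg ((k : ℝ) - 2 * ((J : ℝ) + 1))]
  have h1x : (1 : ℂ) - x ≠ 0 := one_sub_div_sq_ne J k hkj
  have hval : vf (J + 1) k - 1 = x * ((1 : ℂ) - x)⁻¹ := by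
    simp only [vf, if_neg hkj]
    rw [← hx]
    linear_combination inv_mul_cancel₀ h1x
  have hlow : (1 : ℝ) / 2 ≤ ‖(1 : ℂ) - x‖ := by
    have h := norm_sub_norm_le (1 : ℂ) x
    rw [norm_one] at h
    linarith
  have hinv : ‖((1 : ℂ) - x)⁻¹‖ ≤ 2 := by
    rw [norm_inv]
    have h2 := inv_anti₀ (show (0 : ℝ) < 1 / 2 by norm_num) hlow
    norm_num at h2
    exact h2
  rw [hval, norm_mul]
  calc ‖x‖ * ‖((1 : ℂ) - x)⁻¹‖ ≤ (((J : ℝ) + 1) ^ 2 / (k : ℝ) ^ 2) * 2 := by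
        apply mul_le_mul (le_of_eq hnormx) hinv (norm_nonneg _) (by positivity)
    _ = 2 * ((J : ℝ) + 1) ^ 2 / (k : ℝ) ^ 2 := by ring

private lemma tprod_vf (J : ℕ) : ∏' k, vf (J + 1) k = (-1) ^ J * 2 := by
  have hmult : Multipliable (vf (J + 1)) :=
    multipliable_aux _ (2 * ((J : ℝ) + 1) ^ 2) (vf_ne J) (vf_bound J)
  have ht := hmult.hasProd.tendsto_prod_nat
  have hsub : Filter.Tendsto (fun m => ∏ k ∈ Finset.range (J + 1 + 1 + m), vf (J + 1) k)
      Filter.atTop (𝓝 (∏' k, vf (J + 1) k)) := by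
    have h := ht.comp (Filter.tendsto_add_atTop_nat (J + 1 + 1))
    apply h.congr
    intro m
    simp only [Function.comp_apply]
    rw [show m + (J + 1 + 1) = J + 1 + 1 + m by omega]
  have hlim : Filter.Tendsto (fun m => ∏ k ∈ Finset.range (J + 1 + 1 + m), vf (J + 1) k)
      Filter.atTop (𝓝 ((-1) ^ J * 2)) := by
    have hre := tendsto_factorial_ratio (J + 1)
    have hco : Filter.Tendsto
        (fun m : ℕ => ((((J + 1 + m)! : ℕ) : ℂ)) ^ 2 /
          (((m ! : ℕ) : ℂ) * (((2 * (J + 1) + m)! : ℕ) : ℂ)))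
        Filter.atTop (𝓝 1) := by
      have h := (Complex.continuous_ofReal.tendsto 1).comp hre
      rw [Complex.ofReal_one] at h
      apply h.congr
      intro m
      simp only [Function.comp_apply]
      push_cast
      ring
    have h2 := hco.const_mul ((-1 : ℂ) ^ J * 2)
    rw [mul_one] at h2
    apply h2.congr
    intro m
    have hvv : ∏ k ∈ Finset.range (J + 1 + 1 + m), vf (J + 1) k
        = ∏ k ∈ Finset.range (J + 1 + 1 + m),
            (if k = J + 1 then (1 : ℂ)
              else (1 - ((J + 1 : ℕ) : ℂ) ^ 2 / ((k : ℕ) : ℂ) ^ 2)⁻¹) :=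
      Finset.prod_congr rfl fun k _ => rfl
    rw [hvv, prod_v_eval J m, mul_div_assoc]
  exact tendsto_nhds_unique hsub hlim

/-- If `j² ≠ n² + γₙ`, then
`K(n,j) = (-1)^(j+1)·(2nj/(j² - n² - γₙ))·sinc(π√(n² + γₙ))`,
where `K(n,j) = (n/j)·∏_{k≠j}(1 - (n² + γₙ)/k²)·∏_{k≠j}(1 - j²/k²)⁻¹`
(products over positive integers `k ≠ j`) and the entire function
`g` extends `w ↦ sinc(πw) = sin(πw)/(πw)` through `g(w²) = sinc(πw)`, `g(0) = 1`. -/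
theorem stmt5 (n j : ℕ) (hn : 1 ≤ n) (hj : 1 ≤ j) (γn : ℂ)
    (hne : (j : ℂ) ^ 2 ≠ (n : ℂ) ^ 2 + γn)
    (g : ℂ → ℂ) (hg : Differentiable ℂ g) (hg0 : g 0 = 1)
    (hgval : ∀ w : ℂ, w ≠ 0 →
      g (w ^ 2) = Complex.sin ((Real.pi : ℂ) * w) / ((Real.pi : ℂ) * w))
    (K : ℂ)
    (hK : K = ((n : ℂ) / (j : ℂ)) *
        (∏' k : {k : ℕ // 1 ≤ k ∧ k ≠ j}, (1 - ((n : ℂ) ^ 2 + γn) / ((k : ℕ) : ℂ) ^ 2)) *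
        (∏' k : {k : ℕ // 1 ≤ k ∧ k ≠ j}, (1 - (j : ℂ) ^ 2 / ((k : ℕ) : ℂ) ^ 2)⁻¹)) :
    K = (-1 : ℂ) ^ (j + 1) *
        (2 * (n : ℂ) * (j : ℂ) / ((j : ℂ) ^ 2 - (n : ℂ) ^ 2 - γn)) *
        g ((n : ℂ) ^ 2 + γn) := by
  classical
  obtain ⟨J, rfl⟩ : ∃ J, j = J + 1 := ⟨j - 1, by omega⟩
  set S : ℂ := (n : ℂ) ^ 2 + γn with hS
  have hj0 : ((J + 1 : ℕ) : ℂ) ≠ 0 := Nat.cast_ne_zero.mpr (Nat.succ_ne_zero J)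
  have hjS : ((J + 1 : ℕ) : ℂ) ^ 2 - S ≠ 0 := sub_ne_zero.mpr hne
  have hpow : ((-1 : ℂ)) ^ (J + 1 + 1) = (-1) ^ J := by
    rw [pow_succ, pow_succ]; ring
  have hgoalden : ((J + 1 : ℕ) : ℂ) ^ 2 - (n : ℂ) ^ 2 - γn = ((J + 1 : ℕ) : ℂ) ^ 2 - S := by
    rw [hS]; ring
  have hsecond : (∏' k : {k : ℕ // 1 ≤ k ∧ k ≠ J + 1},
      (1 - ((J + 1 : ℕ) : ℂ) ^ 2 / ((k : ℕ) : ℂ) ^ 2)⁻¹) = (-1) ^ J * 2 := by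
    have h1 : (∏' k : {k : ℕ // 1 ≤ k ∧ k ≠ J + 1},
        (1 - ((J + 1 : ℕ) : ℂ) ^ 2 / ((k : ℕ) : ℂ) ^ 2)⁻¹)
        = ∏' x : {k : ℕ | 1 ≤ k ∧ k ≠ J + 1},
            (1 - ((J + 1 : ℕ) : ℂ) ^ 2 / ((x : ℕ) : ℂ) ^ 2)⁻¹ := rfl
    have h2 := _root_.tprod_subtype {k : ℕ | 1 ≤ k ∧ k ≠ J + 1}
      (fun k : ℕ => ((1 : ℂ) - ((J + 1 : ℕ) : ℂ) ^ 2 / ((k : ℕ) : ℂ) ^ 2)⁻¹)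
    rw [h1, h2, ← tprod_vf J]
    apply tprod_congr
    intro k
    by_cases hk : k ∈ {k : ℕ | 1 ≤ k ∧ k ≠ J + 1}
    · rw [Set.mulIndicator_of_mem hk]
      simp only [vf, if_neg hk.2]
    · rw [Set.mulIndicator_of_notMem hk]
      simp only [Set.mem_setOf_eq, not_and_or, not_le, Nat.lt_one_iff, not_not] at hk
      rcases hk with rfl | rfl
      · have h0 : (0 : ℕ) ≠ J + 1 := by omega
        simp [vf, h0]
      · simp [vf]
  by_cases hex : ∃ m : ℕ, 1 ≤ m ∧ ((m : ℕ) : ℂ) ^ 2 = S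
  · obtain ⟨M, hM1, hM2⟩ := hex
    have hMj : M ≠ J + 1 := by
      intro h
      rw [h] at hM2
      exact hne hM2
    have hM0 : ((M : ℕ) : ℂ) ≠ 0 := Nat.cast_ne_zero.mpr (by omega)
    have hzfac : (fun k : {k : ℕ // 1 ≤ k ∧ k ≠ J + 1} =>
        (1 : ℂ) - S / ((k : ℕ) : ℂ) ^ 2) ⟨M, hM1, hMj⟩ = 0 := by
      simp only
      rw [← hM2, div_self (pow_ne_zero 2 hM0), sub_self]
    have hP1 : (∏' k : {k : ℕ // 1 ≤ k ∧ k ≠ J + 1},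
        ((1 : ℂ) - S / ((k : ℕ) : ℂ) ^ 2)) = 0 :=
      (hasProd_zero_of_zero
        (f := fun k : {k : ℕ // 1 ≤ k ∧ k ≠ J + 1} => (1 : ℂ) - S / ((k : ℕ) : ℂ) ^ 2)
        ⟨M, hM1, hMj⟩ hzfac).tprod_eq
    have hgS : g S = 0 := by
      rw [← hM2, hgval ((M : ℕ) : ℂ) hM0]
      have harg : ((Real.pi : ℂ)) * ((M : ℕ) : ℂ) = (((M : ℝ) * Real.pi : ℝ) : ℂ) := by
        push_cast; ring
      rw [harg, ← Complex.ofReal_sin, Real.sin_nat_mul_pi M]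
      simp
    rw [hK, hP1, hgS]
    ring
  · push_neg at hex
    have hnz : ∀ m : ℕ, 1 ≤ m → ((m : ℕ) : ℂ) ^ 2 ≠ S := hex
    have hfirst : (∏' k : {k : ℕ // 1 ≤ k ∧ k ≠ J + 1},
        ((1 : ℂ) - S / ((k : ℕ) : ℂ) ^ 2)) = g S / Gf S (J + 1) := by
      have h1 : (∏' k : {k : ℕ // 1 ≤ k ∧ k ≠ J + 1}, ((1 : ℂ) - S / ((k : ℕ) : ℂ) ^ 2))
          = ∏' x : {k : ℕ | 1 ≤ k ∧ k ≠ J + 1}, ((1 : ℂ) - S / ((x : ℕ) : ℂ) ^ 2) := rfl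
      have h2 := _root_.tprod_subtype {k : ℕ | 1 ≤ k ∧ k ≠ J + 1}
        (fun k : ℕ => (1 : ℂ) - S / ((k : ℕ) : ℂ) ^ 2)
      rw [h1, h2, ← tprod_uf S (J + 1) g hg0 hgval hnz]
      apply tprod_congr
      intro k
      by_cases hk : k ∈ {k : ℕ | 1 ≤ k ∧ k ≠ J + 1}
      · rw [Set.mulIndicator_of_mem hk]
        simp only [uf, Gf, if_neg hk.2]
      · rw [Set.mulIndicator_of_notMem hk]
        simp only [Set.mem_setOf_eq, not_and_or, not_le, Nat.lt_one_iff, not_not] at hk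
        rcases hk with rfl | rfl
        · have h0 : (0 : ℕ) ≠ J + 1 := by omega
          simp [uf, Gf, h0]
        · simp [uf]
    have hGj : Gf S (J + 1)
        = (((J + 1 : ℕ) : ℂ) ^ 2 - S) / ((J + 1 : ℕ) : ℂ) ^ 2 := by
      simp only [Gf]
      rw [sub_div, div_self (pow_ne_zero 2 hj0)]
    rw [hK, hfirst, hsecond, hGj, hpow, hgoalden]
    exact alg_final2 ((-1) ^ J) (n : ℂ) ((J + 1 : ℕ) : ℂ) (((J + 1 : ℕ) : ℂ) ^ 2 - S)
      (g S) hj0 hjS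
end

section
/- The map from the odd subspace of ℓ²(ℤ) (real sequences (a_j)_{j∈ℤ} with a_{-j} = -a_j and ∑ a_j² < ∞) to ℓ²₁(ℕ) (sequences (b_n)_{n≥1} with ∑ n²b_n² < ∞) given by (a_j) ↦ (-μ_j^{-1/2} a_j)_{j≥1} is a bounded linear bijection (Banach space isomorphism), provided (μ_j)_{j≥1} is a sequence of positive reals with √μ_j = πj + O(1/j). -/
set_option maxHeartbeats 4000000

open Real

private lemma aux_odd_zero {a : ℤ → ℝ} (h : ∀ j : ℤ, a (-j) = -a j) : a 0 = 0 := by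
  have := h 0; simp at this; linarith

private lemma aux_sq_odd {a : ℤ → ℝ} (h : ∀ j : ℤ, a (-j) = -a j) (j : ℤ) :
    a (-j) ^ 2 = a j ^ 2 := by rw [h]; ring

private lemma aux_sum_nat {a : ℤ → ℝ} (h : Summable fun j : ℤ => a j ^ 2) :
    Summable fun n : ℕ => a n ^ 2 :=
  h.comp_injective (fun x y hxy => by exact_mod_cast hxy)

private lemma aux_tsum_int {a : ℤ → ℝ} (hodd : ∀ j : ℤ, a (-j) = -a j)
    (h : Summable fun j : ℤ => a j ^ 2) :
    (∑' j : ℤ, a j ^ 2) = 2 * ∑' n : ℕ, a n ^ 2 := by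
  have h0 := aux_odd_zero hodd
  have hnat := aux_sum_nat h
  have hshift : Summable (fun n : ℕ => a (n + 1) ^ 2) := by
    have := (summable_nat_add_iff 1).mpr hnat
    simpa using this
  have hneg : (fun n : ℕ => a (-((n : ℤ) + 1)) ^ 2) = fun n : ℕ => a ((n : ℤ) + 1) ^ 2 := by
    funext n; exact aux_sq_odd hodd _
  have hsneg : Summable (fun n : ℕ => a (-((n : ℤ) + 1)) ^ 2) := by
    rw [hneg]; exact_mod_cast hshift
  have h1 : (∑' j : ℤ, a j ^ 2) = (∑' n : ℕ, a n ^ 2) + ∑' n : ℕ, a (-((n : ℤ) + 1)) ^ 2 :=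
    tsum_of_nat_of_neg_add_one hnat hsneg
  have h2 : (∑' n : ℕ, a (-((n : ℤ) + 1)) ^ 2) = ∑' n : ℕ, a ((n : ℤ) + 1) ^ 2 := by rw [hneg]
  have h3 : (∑' n : ℕ, a n ^ 2) = a (0 : ℕ) ^ 2 + ∑' n : ℕ, a (n + 1 : ℕ) ^ 2 :=
    Summable.tsum_eq_zero_add hnat
  have h4 : (∑' n : ℕ, a ((n : ℤ) + 1) ^ 2) = ∑' n : ℕ, a (n + 1 : ℕ) ^ 2 :=
    tsum_congr fun n => by norm_num
  rw [h1, h2, h4]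
  simp only [Nat.cast_zero, h0] at h3
  norm_num at h3
  linarith

private lemma aux_bound (μ : ℕ → ℝ) (hμpos : ∀ j, 1 ≤ j → 0 < μ j) (C : ℝ)
    (hC : ∀ j : ℕ, 1 ≤ j → |Real.sqrt (μ j) - Real.pi * j| ≤ C / j) :
    ∃ c1 c2 : ℝ, 0 < c1 ∧ 0 < c2 ∧ ∀ n : ℕ, 1 ≤ n →
      c1 * n ≤ Real.sqrt (μ n) ∧ Real.sqrt (μ n) ≤ c2 * n := by
  have hπ : (0 : ℝ) < Real.pi := Real.pi_pos
  have hC0 : 0 ≤ C := by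
    have h := hC 1 le_rfl
    norm_num at h
    exact le_trans (abs_nonneg _) h
  set N : ℕ := ⌈Real.sqrt (2 * C / Real.pi)⌉₊ + 1 with hN
  have hNne : (Finset.Icc 1 N).Nonempty := ⟨1, by simp [hN]⟩
  obtain ⟨k0, hk0mem, hk0min⟩ :=
    Finset.exists_min_image (Finset.Icc 1 N) (fun k => Real.sqrt (μ k) / k) hNne
  have hk01 : 1 ≤ k0 := (Finset.mem_Icc.mp hk0mem).1
  have hm : 0 < Real.sqrt (μ k0) / k0 := by
    apply div_pos (Real.sqrt_pos.mpr (hμpos k0 hk01))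
    exact_mod_cast Nat.lt_of_lt_of_le Nat.zero_lt_one hk01
  refine ⟨min (Real.sqrt (μ k0) / k0) (Real.pi / 2), Real.pi + C,
    lt_min hm (by positivity), by positivity, ?_⟩
  intro n hn
  have hn0 : (0 : ℝ) < n := by exact_mod_cast hn
  have habs := hC n hn
  rw [abs_le] at habs
  constructor
  · by_cases hcase : n ≤ N
    · have hmem : n ∈ Finset.Icc 1 N := Finset.mem_Icc.mpr ⟨hn, hcase⟩
      have := hk0min n hmem
      calc min (Real.sqrt (μ k0) / k0) (Real.pi / 2) * n
          ≤ (Real.sqrt (μ k0) / k0) * n := by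
            apply mul_le_mul_of_nonneg_right (min_le_left _ _) (le_of_lt hn0)
        _ ≤ (Real.sqrt (μ n) / n) * n := by
            apply mul_le_mul_of_nonneg_right this (le_of_lt hn0)
        _ = Real.sqrt (μ n) := by field_simp
    · push_neg at hcase
      have hnN : (Real.sqrt (2 * C / Real.pi)) ≤ (n : ℝ) := by
        have h1 : (⌈Real.sqrt (2 * C / Real.pi)⌉₊ : ℝ) ≤ n := by
          have hNn : (N : ℝ) ≤ n := by exact_mod_cast le_of_lt hcase
          have hNcast : (⌈Real.sqrt (2 * C / Real.pi)⌉₊ : ℝ) ≤ (N : ℝ) := by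
            rw [hN]; push_cast; linarith
          linarith
        exact le_trans (Nat.le_ceil _) h1
      have hsq : 2 * C / Real.pi ≤ (n : ℝ) ^ 2 := by
        have h2 : (0 : ℝ) ≤ 2 * C / Real.pi := by positivity
        calc 2 * C / Real.pi = Real.sqrt (2 * C / Real.pi) ^ 2 := (Real.sq_sqrt h2).symm
          _ ≤ (n : ℝ) ^ 2 := by
              apply pow_le_pow_left₀ (Real.sqrt_nonneg _) hnN
      have hCn : C / n ≤ Real.pi * n / 2 := by
        rw [div_le_div_iff₀ hn0 (by norm_num : (0:ℝ) < 2)]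
        calc C * 2 = (2 * C / Real.pi) * Real.pi := by field_simp
          _ ≤ (n:ℝ)^2 * Real.pi := by
              apply mul_le_mul_of_nonneg_right hsq (le_of_lt hπ)
          _ = Real.pi * n * n := by ring
      have hlow : Real.pi * n - C / n ≤ Real.sqrt (μ n) := by linarith
      calc min (Real.sqrt (μ k0) / k0) (Real.pi / 2) * n ≤ (Real.pi / 2) * n := by
            apply mul_le_mul_of_nonneg_right (min_le_right _ _) (le_of_lt hn0)
        _ ≤ Real.sqrt (μ n) := by nlinarith
  · have h1 : (1:ℝ) ≤ n := by exact_mod_cast hn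
    have h1n : C / n ≤ C * n := by
      rw [div_le_iff₀ hn0]
      nlinarith [mul_nonneg (mul_nonneg hC0 (sub_nonneg.mpr h1)) (by linarith : (0:ℝ) ≤ (n:ℝ) + 1)]
    calc Real.sqrt (μ n) ≤ Real.pi * n + C / n := by linarith
      _ ≤ Real.pi * n + C * n := by linarith
      _ = (Real.pi + C) * n := by ring

/-- Let `(μ_j)_{j≥1}` be positive reals with `√μ_j = πj + O(1/j)`.  Then the map
`(a_j)_{j∈ℤ} ↦ (-μ_n^{-1/2} a_n)_{n≥1}` is a bounded linear bijection from the odd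
subspace of `ℓ²(ℤ)` onto `ℓ²₁(ℕ)` (sequences indexed by `n ≥ 1` with `∑ n² b_n² < ∞`),
with two-sided norm bounds. -/
theorem stmt6 (μ : ℕ → ℝ) (hμpos : ∀ j, 1 ≤ j → 0 < μ j)
    (hμasym : ∃ C : ℝ, ∀ j : ℕ, 1 ≤ j →
      |Real.sqrt (μ j) - Real.pi * j| ≤ C / j) :
    ∃ F : {a : ℤ → ℝ // (∀ j : ℤ, a (-j) = -a j) ∧ Summable (fun j : ℤ => a j ^ 2)} →
        {b : ℕ → ℝ // b 0 = 0 ∧ Summable (fun n : ℕ => (n : ℝ) ^ 2 * b n ^ 2)},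
      (∀ a, ∀ n : ℕ, 1 ≤ n → (F a).val n = -(Real.sqrt (μ n))⁻¹ * a.val (n : ℤ)) ∧
      Function.Bijective F ∧
      ∃ C : ℝ, 0 < C ∧ ∀ a,
        (∑' n : ℕ, (n : ℝ) ^ 2 * (F a).val n ^ 2) ≤ C * (∑' j : ℤ, a.val j ^ 2) ∧
        (∑' j : ℤ, a.val j ^ 2) ≤ C * (∑' n : ℕ, (n : ℝ) ^ 2 * (F a).val n ^ 2) := by
  obtain ⟨C0, hC0⟩ := hμasym
  obtain ⟨c1, c2, hc1, hc2, hbd⟩ := aux_bound μ hμpos C0 hC0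
  have hspos : ∀ n : ℕ, 1 ≤ n → 0 < Real.sqrt (μ n) := fun n hn =>
    Real.sqrt_pos.mpr (hμpos n hn)
  -- pointwise two-sided bound for the F-image
  have hpt : ∀ (av : ℤ → ℝ) (n : ℕ), 1 ≤ n →
      (n : ℝ) ^ 2 * (-(Real.sqrt (μ n))⁻¹ * av n) ^ 2 ≤ c1⁻¹ ^ 2 * av n ^ 2 ∧
      av (n : ℤ) ^ 2 ≤ c2 ^ 2 * ((n : ℝ) ^ 2 * (-(Real.sqrt (μ n))⁻¹ * av n) ^ 2) := by
    intro av n hn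
    obtain ⟨hl, hu⟩ := hbd n hn
    have hs := hspos n hn
    have hn0 : (0 : ℝ) < n := by exact_mod_cast hn
    have hkey : Real.sqrt (μ n) ^ 2 * (-(Real.sqrt (μ n))⁻¹ * av n) ^ 2 = av (n : ℤ) ^ 2 := by
      field_simp
    constructor
    · have h1 : (c1 * n) ^ 2 * (-(Real.sqrt (μ n))⁻¹ * av n) ^ 2 ≤ av (n:ℤ) ^ 2 := by
        rw [← hkey]
        apply mul_le_mul_of_nonneg_right _ (sq_nonneg _)
        apply pow_le_pow_left₀ (by positivity) hl
      have hc1' : (0:ℝ) < c1 ^ 2 := by positivity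
      rw [← mul_le_mul_iff_right₀ hc1']
      calc c1 ^ 2 * ((n:ℝ)^2 * (-(Real.sqrt (μ n))⁻¹ * av n)^2)
          = (c1 * n)^2 * (-(Real.sqrt (μ n))⁻¹ * av n)^2 := by ring
        _ ≤ av (n:ℤ) ^ 2 := h1
        _ = c1 ^ 2 * (c1⁻¹ ^ 2 * av (n:ℤ) ^ 2) := by
            field_simp
    · rw [← hkey]
      have h2 : Real.sqrt (μ n) ^ 2 ≤ (c2 * n) ^ 2 :=
        pow_le_pow_left₀ (le_of_lt hs) hu 2
      calc Real.sqrt (μ n) ^ 2 * (-(Real.sqrt (μ n))⁻¹ * av n) ^ 2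
          ≤ (c2 * n) ^ 2 * (-(Real.sqrt (μ n))⁻¹ * av n) ^ 2 :=
            mul_le_mul_of_nonneg_right h2 (sq_nonneg _)
        _ = c2 ^ 2 * ((n:ℝ)^2 * (-(Real.sqrt (μ n))⁻¹ * av n) ^ 2) := by ring
  -- image membership
  have hmem : ∀ (av : ℤ → ℝ), (∀ j : ℤ, av (-j) = -av j) → Summable (fun j : ℤ => av j ^ 2) →
      ((fun n : ℕ => -(Real.sqrt (μ n))⁻¹ * av n) 0 = 0 ∧
        Summable (fun n : ℕ => (n : ℝ) ^ 2 * ((fun n : ℕ => -(Real.sqrt (μ n))⁻¹ * av n) n) ^ 2)) := by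
    intro av hodd hsum
    constructor
    · show -(Real.sqrt (μ 0))⁻¹ * av ((0:ℕ) : ℤ) = 0
      norm_num [aux_odd_zero hodd]
    · apply Summable.of_nonneg_of_le (fun n => by positivity)
        (f := fun n : ℕ => c1⁻¹ ^ 2 * av (n : ℤ) ^ 2)
      · intro n
        rcases Nat.eq_zero_or_pos n with h0 | h1
        · subst h0; simp; positivity
        · exact (hpt av n h1).1
      · exact (aux_sum_nat hsum).mul_left _
  refine ⟨fun a => ⟨fun n : ℕ => -(Real.sqrt (μ n))⁻¹ * a.val n,
      (hmem a.val a.2.1 a.2.2).1, (hmem a.val a.2.1 a.2.2).2⟩,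
    fun a n _ => rfl, ?_, ?_⟩
  · -- bijectivity via explicit inverse
    have hGmem : ∀ (bv : ℕ → ℝ), bv 0 = 0 → Summable (fun n : ℕ => (n : ℝ) ^ 2 * bv n ^ 2) →
        ((∀ j : ℤ, (fun j : ℤ => -(j.sign : ℝ) * (Real.sqrt (μ j.natAbs) * bv j.natAbs)) (-j)
            = -((fun j : ℤ => -(j.sign : ℝ) * (Real.sqrt (μ j.natAbs) * bv j.natAbs)) j)) ∧
          Summable (fun j : ℤ =>
            ((fun j : ℤ => -(j.sign : ℝ) * (Real.sqrt (μ j.natAbs) * bv j.natAbs)) j) ^ 2)) := by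
      intro bv hb0 hbsum
      constructor
      · intro j; simp only [Int.sign_neg, Int.natAbs_neg]; push_cast; ring
      · have hg : Summable (fun n : ℕ => (Real.sqrt (μ n) * bv n) ^ 2) := by
          apply Summable.of_nonneg_of_le (fun n => sq_nonneg _)
            (f := fun n : ℕ => c2 ^ 2 * ((n : ℝ) ^ 2 * bv n ^ 2))
          · intro n
            rcases Nat.eq_zero_or_pos n with h0 | h1
            · subst h0; simp [hb0]
            · have hu := (hbd n h1).2
              have hs := le_of_lt (hspos n h1)
              calc (Real.sqrt (μ n) * bv n) ^ 2 = Real.sqrt (μ n) ^ 2 * bv n ^ 2 := by ring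
                _ ≤ (c2 * n) ^ 2 * bv n ^ 2 := by
                    apply mul_le_mul_of_nonneg_right _ (sq_nonneg _)
                    exact pow_le_pow_left₀ hs hu 2
                _ = c2 ^ 2 * ((n:ℝ)^2 * bv n ^ 2) := by ring
          · exact hbsum.mul_left _
        apply Summable.of_nonneg_of_le (fun j => sq_nonneg _)
          (f := fun j : ℤ => (Real.sqrt (μ j.natAbs) * bv j.natAbs) ^ 2)
        · intro j
          rcases lt_trichotomy j 0 with h | h | h
          · rw [Int.sign_eq_neg_one_iff_neg.mpr h]; push_cast; nlinarith [sq_nonneg (Real.sqrt (μ j.natAbs) * bv j.natAbs)]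
          · subst h; simp; positivity
          · rw [Int.sign_eq_one_iff_pos.mpr h]; push_cast; nlinarith [sq_nonneg (Real.sqrt (μ j.natAbs) * bv j.natAbs)]
        · apply Summable.of_nat_of_neg <;> simp only [Int.natAbs_neg, Int.natAbs_natCast] <;>
            exact hg
    refine Function.bijective_iff_has_inverse.mpr
      ⟨fun b => ⟨fun j : ℤ => -(j.sign : ℝ) * (Real.sqrt (μ j.natAbs) * b.val j.natAbs),
        (hGmem b.val b.2.1 b.2.2).1, (hGmem b.val b.2.1 b.2.2).2⟩, ?_, ?_⟩
    · -- left inverse : G (F a) = a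
      rintro ⟨av, hodd, hsum⟩
      apply Subtype.ext
      funext j
      show -(j.sign : ℝ) * (Real.sqrt (μ j.natAbs) * (-(Real.sqrt (μ j.natAbs))⁻¹ * av j.natAbs))
          = av j
      rcases lt_trichotomy j 0 with h | h | h
      · have hs : j.sign = -1 := Int.sign_eq_neg_one_iff_neg.mpr h
        have hna : (j.natAbs : ℤ) = -j := by omega
        have h1 : 1 ≤ j.natAbs := by
          rcases Nat.eq_zero_or_pos j.natAbs with h0 | h1
          · exfalso; rw [Int.natAbs_eq_zero] at h0; omega
          · exact h1
        have hsne := ne_of_gt (hspos _ h1)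
        rw [hs, hna, hodd]
        push_cast
        field_simp
      · subst h
        simp [aux_odd_zero hodd]
      · have hs : j.sign = 1 := Int.sign_eq_one_iff_pos.mpr h
        have hna : (j.natAbs : ℤ) = j := by omega
        have h1 : 1 ≤ j.natAbs := by
          rcases Nat.eq_zero_or_pos j.natAbs with h0 | h1
          · exfalso; rw [Int.natAbs_eq_zero] at h0; omega
          · exact h1
        have hsne := ne_of_gt (hspos _ h1)
        rw [hs, hna]
        push_cast
        field_simp
    · -- right inverse : F (G b) = b
      rintro ⟨bv, hb0, hbsum⟩
      apply Subtype.ext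
      funext n
      show -(Real.sqrt (μ n))⁻¹ *
          (-((((n : ℕ) : ℤ)).sign : ℝ) * (Real.sqrt (μ (((n:ℕ):ℤ)).natAbs) * bv (((n:ℕ):ℤ)).natAbs)) = bv n
      rcases Nat.eq_zero_or_pos n with h0 | h1
      · subst h0; simp [hb0]
      · have hs : (((n:ℕ):ℤ)).sign = 1 := Int.sign_natCast_of_ne_zero (by omega)
        have hna : (((n:ℕ):ℤ)).natAbs = n := Int.natAbs_natCast n
        have hsne := ne_of_gt (hspos n h1)
        rw [hs, hna]
        push_cast
        field_simp
  · -- norm bounds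
    refine ⟨c1⁻¹ ^ 2 + 2 * c2 ^ 2, by positivity, ?_⟩
    rintro ⟨av, hodd, hsum⟩
    have hnatsum := aux_sum_nat hsum
    have hFsum : Summable (fun n : ℕ => (n : ℝ) ^ 2 * (-(Real.sqrt (μ n))⁻¹ * av n) ^ 2) :=
      (hmem av hodd hsum).2
    have htint : (∑' j : ℤ, av j ^ 2) = 2 * ∑' n : ℕ, av n ^ 2 := aux_tsum_int hodd hsum
    have hT1 : (∑' n : ℕ, (n : ℝ) ^ 2 * (-(Real.sqrt (μ n))⁻¹ * av n) ^ 2)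
        ≤ c1⁻¹ ^ 2 * ∑' n : ℕ, av n ^ 2 := by
      rw [← tsum_mul_left]
      apply Summable.tsum_le_tsum _ hFsum (hnatsum.mul_left _)
      intro n
      rcases Nat.eq_zero_or_pos n with h0 | h1
      · subst h0; simp; positivity
      · exact (hpt av n h1).1
    have hT2 : (∑' n : ℕ, av n ^ 2)
        ≤ c2 ^ 2 * ∑' n : ℕ, (n : ℝ) ^ 2 * (-(Real.sqrt (μ n))⁻¹ * av n) ^ 2 := by
      rw [← tsum_mul_left]
      apply Summable.tsum_le_tsum _ hnatsum (hFsum.mul_left _)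
      intro n
      rcases Nat.eq_zero_or_pos n with h0 | h1
      · subst h0; simp [aux_odd_zero hodd]
      · exact (hpt av n h1).2
    have hTnn : (0 : ℝ) ≤ ∑' n : ℕ, (n : ℝ) ^ 2 * (-(Real.sqrt (μ n))⁻¹ * av n) ^ 2 :=
      tsum_nonneg fun n => by positivity
    have hSnn : (0 : ℝ) ≤ ∑' n : ℕ, av n ^ 2 := tsum_nonneg fun n => sq_nonneg _
    constructor
    · show (∑' n : ℕ, (n : ℝ) ^ 2 * (-(Real.sqrt (μ n))⁻¹ * av n) ^ 2) ≤ _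
      rw [htint]
      nlinarith [sq_nonneg c2]
    · show (∑' j : ℤ, av j ^ 2) ≤ _
      rw [htint]
      nlinarith [sq_nonneg c1⁻¹]
end
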